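/- arXiv:1511.06132 — 7 statements merged into one kernel-verified Lean document; each statement's English description precedes it below -/
import Mathlib

section
/- Let G be a connected simple graph on n ≥ 2 vertices with maximum degree Δ₁ and second maximum degree Δ₂. Then the distance Estrada index satisfies DEE(G) ≥ e^{√((2n-2-Δ₁)(2n-2-Δ₂))} + (n-1)·e^{-√((2-Δ₁/(n-1))(2-Δ₂/(n-1)))}, with equality if and only if G is the complete graph K_n. -/
namespace DistanceEstrada

variable {n : ℕ}

/-- The distance matrix of a simple graph on `Fin n`. -/
noncomputable def distMatrix (G : SimpleGraph (Fin n)) : Matrix (Fin n) (Fin n) ℝ :=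
  fun i j => (G.dist i j : ℝ)

lemma distMatrix_isHermitian (G : SimpleGraph (Fin n)) : (distMatrix G).IsHermitian := by
  unfold Matrix.IsHermitian
  ext i j
  simp [distMatrix, Matrix.conjTranspose_apply, SimpleGraph.dist_comm]

/-- The distance eigenvalues of `G` (in no particular order). -/
noncomputable def distEig (G : SimpleGraph (Fin n)) : Fin n → ℝ :=
  (distMatrix_isHermitian G).eigenvalues

/-- The distance Estrada index. -/
noncomputable def DEE (G : SimpleGraph (Fin n)) : ℝ :=
  ∑ i, Real.exp (distEig G i)

open Classical in
/-- The adjacency matrix of `G` over `ℝ`. -/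
noncomputable def adjMat (G : SimpleGraph (Fin n)) : Matrix (Fin n) (Fin n) ℝ :=
  fun i j => if G.Adj i j then 1 else 0

lemma adjMat_isHermitian (G : SimpleGraph (Fin n)) : (adjMat G).IsHermitian := by
  unfold Matrix.IsHermitian
  ext i j
  simp only [adjMat, Matrix.conjTranspose_apply, star_trivial]
  rw [SimpleGraph.adj_comm]

/-- The adjacency eigenvalues of `G` (in no particular order). -/
noncomputable def adjEig (G : SimpleGraph (Fin n)) : Fin n → ℝ :=
  (adjMat_isHermitian G).eigenvalues

/-- The Estrada index. -/
noncomputable def EE (G : SimpleGraph (Fin n)) : ℝ :=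
  ∑ i, Real.exp (adjEig G i)


section AuxSpectral

open Matrix

variable {N : ℕ} {A : Matrix (Fin N) (Fin N) ℝ}

lemma auxSumEig (hA : A.IsHermitian) : ∑ i, hA.eigenvalues i = A.trace := by
  have h := hA.spectral_theorem
  have : A.trace = (Matrix.diagonal (RCLike.ofReal ∘ hA.eigenvalues) :
      Matrix (Fin N) (Fin N) ℝ).trace := by
    conv_lhs => rw [h]
    rw [Unitary.conjStarAlgAut_apply, Matrix.trace_mul_cycle,
      (Matrix.mem_unitaryGroup_iff').mp (hA.eigenvectorUnitary).2, Matrix.one_mul]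
  rw [this, Matrix.trace_diagonal]
  simp

lemma auxSqEig (hA : A.IsHermitian) : ∑ i, (hA.eigenvalues i) ^ 2 = (A * A).trace := by
  have h := hA.spectral_theorem
  have hU := (Matrix.mem_unitaryGroup_iff').mp (hA.eigenvectorUnitary).2
  set U : Matrix (Fin N) (Fin N) ℝ := (hA.eigenvectorUnitary : Matrix (Fin N) (Fin N) ℝ) with hUdef
  set D : Matrix (Fin N) (Fin N) ℝ := Matrix.diagonal (RCLike.ofReal ∘ hA.eigenvalues) with hD
  have key : A * A = U * (D * D) * star U := by
    conv_lhs => rw [h]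
    calc (U * D * star U) * (U * D * star U)
        = U * D * (star U * (U * (D * star U))) := by simp only [Matrix.mul_assoc]
      _ = U * D * ((star U * U) * (D * star U)) := by rw [Matrix.mul_assoc (star U)]
      _ = U * (D * D) * star U := by rw [hU, Matrix.one_mul]; simp only [Matrix.mul_assoc]
  rw [key, Matrix.trace_mul_cycle, ← Matrix.mul_assoc, hU, Matrix.one_mul, hD,
    Matrix.diagonal_mul_diagonal, Matrix.trace_diagonal]
  simp [sq]

lemma auxQuadForm (hA : A.IsHermitian) (x : Fin N → ℝ) :
    x ⬝ᵥ (A *ᵥ x) = ∑ i, hA.eigenvalues i *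
      (star (hA.eigenvectorUnitary : Matrix (Fin N) (Fin N) ℝ) *ᵥ x) i ^ 2 ∧
    x ⬝ᵥ x = ∑ i, (star (hA.eigenvectorUnitary : Matrix (Fin N) (Fin N) ℝ) *ᵥ x) i ^ 2 := by
  have hU := (Matrix.mem_unitaryGroup_iff).mp (hA.eigenvectorUnitary).2
  set U : Matrix (Fin N) (Fin N) ℝ := (hA.eigenvectorUnitary : Matrix (Fin N) (Fin N) ℝ) with hUdef
  have hstar : star U = Uᵀ := by
    rw [Matrix.star_eq_conjTranspose]; ext i j; simp [Matrix.conjTranspose_apply]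
  set y : Fin N → ℝ := star U *ᵥ x with hy
  have hxy : ∀ z : Fin N → ℝ, x ⬝ᵥ (U *ᵥ z) = y ⬝ᵥ z := by
    intro z
    rw [Matrix.dotProduct_mulVec, hy, hstar, Matrix.mulVec_transpose]
  constructor
  · conv_lhs => rw [hA.spectral_theorem]
    rw [Unitary.conjStarAlgAut_apply, ← Matrix.mulVec_mulVec, ← Matrix.mulVec_mulVec, hxy, ← hy, dotProduct]
    apply Finset.sum_congr rfl
    intro i _
    rw [Matrix.mulVec_diagonal]
    simp [sq]
    ring
  · have : x ⬝ᵥ x = x ⬝ᵥ (U *ᵥ (star U *ᵥ x)) := by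
      rw [Matrix.mulVec_mulVec, hU, Matrix.one_mulVec]
    rw [this, hxy, ← hy, dotProduct]
    simp [sq]

lemma auxEigRoot (hA : A.IsHermitian) (c d : ℝ)
    (h : A * A = c • A + d • (1 : Matrix (Fin N) (Fin N) ℝ)) (i : Fin N) :
    hA.eigenvalues i ^ 2 = c * hA.eigenvalues i + d := by
  set v : Fin N → ℝ := ⇑(hA.eigenvectorBasis i) with hv
  have hv0 : v ≠ 0 := by
    intro h0
    apply hA.eigenvectorBasis.orthonormal.ne_zero i
    ext j
    exact congrFun h0 j
  have h1 : A *ᵥ v = hA.eigenvalues i • v := hA.mulVec_eigenvectorBasis i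
  have h2 : (A * A) *ᵥ v = (hA.eigenvalues i ^ 2) • v := by
    rw [← Matrix.mulVec_mulVec, h1, Matrix.mulVec_smul, h1, smul_smul, sq]
  rw [h] at h2
  have h3 : (c * hA.eigenvalues i + d) • v = (hA.eigenvalues i ^ 2) • v := by
    rw [← h2, Matrix.add_mulVec, Matrix.smul_mulVec, Matrix.smul_mulVec,
      h1, Matrix.one_mulVec, smul_smul, add_smul]
  have h4 := sub_eq_zero.mpr h3
  rw [← sub_smul] at h4
  rcases smul_eq_zero.mp h4 with h5 | h5
  · have h6 : c * hA.eigenvalues i + d - hA.eigenvalues i ^ 2 = 0 := h5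
    linarith
  · exact absurd h5 hv0

end AuxSpectral

section AuxAnalysis

lemma auxAmgm {a b c : ℝ} (ha : 0 < a) (hab : a ≤ b) (hc : 2 ≤ c) :
    c * Real.sqrt (a * b) ≤ a + (c - 1) * b := by
  have hb : 0 < b := lt_of_lt_of_le ha hab
  set p := Real.sqrt a with hp
  set q := Real.sqrt b with hq
  have hpq : p ≤ q := Real.sqrt_le_sqrt hab
  have hp0 : 0 < p := Real.sqrt_pos.mpr ha
  have hps : p ^ 2 = a := Real.sq_sqrt ha.le
  have hqs : q ^ 2 = b := Real.sq_sqrt hb.le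
  have hs : Real.sqrt (a * b) = p * q := Real.sqrt_mul ha.le b
  rw [hs, ← hps, ← hqs]
  nlinarith [mul_nonneg (sub_nonneg.mpr hpq) (sub_nonneg.mpr hpq), sq_nonneg (q - p)]

lemma auxAmgmEq {a b c : ℝ} (ha : 0 < a) (hab : a ≤ b) (hc : 2 ≤ c)
    (h : c * Real.sqrt (a * b) = a + (c - 1) * b) : a = b := by
  have hb : 0 < b := lt_of_lt_of_le ha hab
  set p := Real.sqrt a with hp
  set q := Real.sqrt b with hq
  have hpq : p ≤ q := Real.sqrt_le_sqrt hab
  have hp0 : 0 < p := Real.sqrt_pos.mpr ha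
  have hq0 : 0 < q := Real.sqrt_pos.mpr hb
  have hps : p ^ 2 = a := Real.sq_sqrt ha.le
  have hqs : q ^ 2 = b := Real.sq_sqrt hb.le
  have hs : Real.sqrt (a * b) = p * q := Real.sqrt_mul ha.le b
  rw [hs, ← hps, ← hqs] at h
  have key : (q - p) * ((c - 1) * q - p) = 0 := by nlinarith
  rcases mul_eq_zero.mp key with h1 | h1
  · have : p = q := by linarith
    rw [← hps, ← hqs, this]
  · nlinarith

lemma auxMonoStrict {c s t : ℝ} (hc : 1 ≤ c) (hs : 0 ≤ s) (hst : s < t) :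
    Real.exp s + c * Real.exp (-(s / c)) < Real.exp t + c * Real.exp (-(t / c)) := by
  have hc0 : 0 < c := lt_of_lt_of_le one_pos hc
  have h1 : Real.exp t - Real.exp s > t - s := by
    have hes : 1 ≤ Real.exp s := Real.one_le_exp hs
    have hts : Real.exp t = Real.exp s * Real.exp (t - s) := by
      rw [← Real.exp_add]; ring_nf
    nlinarith [Real.exp_pos s, Real.add_one_lt_exp (x := t - s) (show t - s ≠ 0 by linarith)]
  have h2 : c * (Real.exp (-(s / c)) - Real.exp (-(t / c))) ≤ t - s := by
    have hx : Real.exp (-(t / c)) = Real.exp (-(s / c)) * Real.exp (-(t/c) + s/c) := by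
      rw [← Real.exp_add]; ring_nf
    have h3 : Real.exp (-(s/c)) ≤ 1 := Real.exp_le_one_iff.mpr (by
      have : 0 ≤ s / c := by positivity
      linarith)
    have hstc : s/c ≤ t/c := by gcongr
    have h4 : 1 - Real.exp (-(t/c) + s/c) ≤ (t - s)/c := by
      have := Real.add_one_le_exp (-(t/c) + s/c)
      rw [sub_div]
      linarith
    have h5 : 0 ≤ 1 - Real.exp (-(t/c) + s/c) := by
      have : Real.exp (-(t/c)+s/c) ≤ 1 := Real.exp_le_one_iff.mpr (by linarith)
      linarith
    calc c * (Real.exp (-(s / c)) - Real.exp (-(t / c)))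
        = c * (Real.exp (-(s/c)) * (1 - Real.exp (-(t/c) + s/c))) := by rw [hx]; ring
      _ ≤ c * (1 * ((t - s)/c)) := by
          apply mul_le_mul_of_nonneg_left _ hc0.le
          apply mul_le_mul h3 h4 h5 zero_le_one
      _ = t - s := by field_simp
  linarith

lemma auxMono {c s t : ℝ} (hc : 1 ≤ c) (hs : 0 ≤ s) (hst : s ≤ t) :
    Real.exp s + c * Real.exp (-(s / c)) ≤ Real.exp t + c * Real.exp (-(t / c)) := by
  rcases eq_or_lt_of_le hst with h | h
  · rw [h]
  · exact (auxMonoStrict hc hs h).le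

lemma auxJensenPt {m x : ℝ} : Real.exp m * (x - m + 1) ≤ Real.exp x := by
  have h := Real.add_one_le_exp (x - m)
  have hx : Real.exp x = Real.exp m * Real.exp (x - m) := by rw [← Real.exp_add]; ring_nf
  rw [hx]
  exact mul_le_mul_of_nonneg_left h (Real.exp_pos m).le

lemma auxJensenSum {ι : Type*} (s : Finset ι) (f : ι → ℝ) (m : ℝ)
    (hm : ∑ i ∈ s, f i = s.card * m) :
    ∑ i ∈ s, Real.exp m * (f i - m + 1) = (s.card : ℝ) * Real.exp m := by
  have h : ∑ i ∈ s, Real.exp m * (f i - m + 1) = Real.exp m * ∑ i ∈ s, (f i - m + 1) := by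
    rw [Finset.mul_sum]
  rw [h, Finset.sum_add_distrib, Finset.sum_sub_distrib, hm]
  simp
  ring

lemma auxJensen {ι : Type*} (s : Finset ι) (f : ι → ℝ) (m : ℝ)
    (hm : ∑ i ∈ s, f i = s.card * m) :
    (s.card : ℝ) * Real.exp m ≤ ∑ i ∈ s, Real.exp (f i) := by
  rw [← auxJensenSum s f m hm]
  exact Finset.sum_le_sum (fun i _ => auxJensenPt)

lemma auxJensenEq {ι : Type*} (s : Finset ι) (f : ι → ℝ) (m : ℝ)
    (hm : ∑ i ∈ s, f i = s.card * m)
    (heq : (s.card : ℝ) * Real.exp m = ∑ i ∈ s, Real.exp (f i)) :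
    ∀ i ∈ s, f i = m := by
  rw [← auxJensenSum s f m hm] at heq
  have hpt := (Finset.sum_eq_sum_iff_of_le
    (fun i (_ : i ∈ s) => auxJensenPt (m := m) (x := f i))).mp heq
  intro i hi
  have h := hpt i hi
  by_contra hne
  have hlt := Real.add_one_lt_exp (x := f i - m) (by intro h0; exact hne (by linarith))
  have hx : Real.exp (f i) = Real.exp m * Real.exp (f i - m) := by rw [← Real.exp_add]; ring_nf
  rw [hx] at h
  have := (mul_lt_mul_iff_right₀ (Real.exp_pos m)).mpr hlt
  linarith

end AuxAnalysis

section AuxGraph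

open Finset

/-- Entrywise lower bound matrix for the distance matrix. -/
noncomputable def lowM (G : SimpleGraph (Fin n)) [DecidableRel G.Adj] :
    Matrix (Fin n) (Fin n) ℝ :=
  fun i j => if i = j then 0 else if G.Adj i j then 1 else 2

lemma lowM_symm (G : SimpleGraph (Fin n)) [DecidableRel G.Adj] (i j : Fin n) :
    lowM G i j = lowM G j i := by
  unfold lowM
  by_cases h : i = j
  · simp [h]
  · have h' : ¬ j = i := fun hh => h hh.symm
    by_cases hadj : G.Adj i j
    · simp [h, h', hadj, hadj.symm]
    · have : ¬ G.Adj j i := fun hh => hadj hh.symm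
      simp [h, h', hadj, this]

lemma lowM_le_dist (G : SimpleGraph (Fin n)) [DecidableRel G.Adj] (hconn : G.Connected)
    (i j : Fin n) : lowM G i j ≤ (G.dist i j : ℝ) := by
  unfold lowM
  by_cases hij : i = j
  · simp [hij]
  · have h1 : 1 ≤ G.dist i j := hconn.pos_dist_of_ne hij
    by_cases hadj : G.Adj i j
    · simp only [hij, if_false, hadj, if_true]
      exact_mod_cast h1
    · simp only [hij, if_false, hadj, if_true]
      have h2 : G.dist i j ≠ 1 := fun h => hadj (SimpleGraph.dist_eq_one_iff_adj.mp h)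
      have : 2 ≤ G.dist i j := by omega
      exact_mod_cast this

lemma lowM_eq (G : SimpleGraph (Fin n)) [DecidableRel G.Adj] (i j : Fin n) :
    lowM G i j = (if i = j then (0:ℝ) else 2) - (if G.Adj i j then (1:ℝ) else 0) := by
  unfold lowM
  by_cases hij : i = j
  · simp [hij]
  · by_cases hadj : G.Adj i j <;> simp [hij, hadj] <;> norm_num

lemma sum_ite_adj (G : SimpleGraph (Fin n)) [DecidableRel G.Adj] (i : Fin n) :
    ∑ j, (if G.Adj i j then (1:ℝ) else 0) = G.degree i := by
  rw [Finset.sum_boole, SimpleGraph.degree, SimpleGraph.neighborFinset_eq_filter]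

lemma sum_ite_diag (c : ℝ) (i : Fin n) :
    ∑ j, (if i = j then (0:ℝ) else c) = n * c - c := by
  have h : ∀ j, (if i = j then (0:ℝ) else c) = c - (if i = j then c else 0) := by
    intro j; by_cases h : i = j <;> simp [h]
  simp only [h, Finset.sum_sub_distrib, Finset.sum_const, Finset.card_univ,
    Fintype.card_fin, Finset.sum_ite_eq, Finset.mem_univ, if_true, nsmul_eq_mul]

lemma sum_lowM (G : SimpleGraph (Fin n)) [DecidableRel G.Adj] (i : Fin n) :
    ∑ j, lowM G i j = 2 * n - 2 - G.degree i := by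
  simp only [lowM_eq, Finset.sum_sub_distrib, sum_ite_adj, sum_ite_diag]
  ring

lemma lowM_sq_eq (G : SimpleGraph (Fin n)) [DecidableRel G.Adj] (i j : Fin n) :
    lowM G i j ^ 2 = (if i = j then (0:ℝ) else 4) - 3 * (if G.Adj i j then (1:ℝ) else 0) := by
  unfold lowM
  by_cases hij : i = j
  · simp [hij]
  · by_cases hadj : G.Adj i j <;> simp [hij, hadj] <;> norm_num

lemma sum_lowM_sq (G : SimpleGraph (Fin n)) [DecidableRel G.Adj] (i : Fin n) :
    ∑ j, lowM G i j ^ 2 = 4 * n - 4 - 3 * G.degree i := by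
  simp only [lowM_sq_eq, Finset.sum_sub_distrib, sum_ite_diag, ← Finset.mul_sum, sum_ite_adj]
  ring

lemma auxDegPos (G : SimpleGraph (Fin n)) [DecidableRel G.Adj] (hconn : G.Connected)
    (hn : 2 ≤ n) (w : Fin n) : 1 ≤ G.degree w := by
  have hcard : 1 < Fintype.card (Fin n) := by simp [Fintype.card_fin]; omega
  obtain ⟨w', hw'⟩ := Fintype.exists_ne_of_one_lt_card hcard w
  obtain ⟨p⟩ := hconn.preconnected w w'
  cases p with
  | nil => exact absurd rfl hw'
  | cons h q =>
    have : 0 < G.degree w := by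
      rw [SimpleGraph.degree_pos_iff_exists_adj]
      exact ⟨_, h⟩
    omega

lemma auxDegTop (G : SimpleGraph (Fin n)) [DecidableRel G.Adj]
    (h : ∀ i j, G.Adj i j ↔ i ≠ j) (w : Fin n) : G.degree w = n - 1 := by
  rw [SimpleGraph.degree, SimpleGraph.neighborFinset_eq_filter]
  have he : Finset.univ.filter (G.Adj w) = Finset.univ.erase w := by
    ext x
    simp only [Finset.mem_filter, Finset.mem_univ, true_and, Finset.mem_erase, and_true]
    rw [h w x]
    exact ⟨fun hx => hx.symm, fun hx => hx.symm⟩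
  rw [he, Finset.card_erase_of_mem (Finset.mem_univ _), Finset.card_univ, Fintype.card_fin]

lemma auxTopOfDeg (G : SimpleGraph (Fin n)) [DecidableRel G.Adj]
    (h : ∀ w, G.degree w = n - 1) : G = ⊤ := by
  ext i j
  rw [SimpleGraph.top_adj]
  constructor
  · exact fun hadj => hadj.ne
  · intro hij
    have hsub : G.neighborFinset i ⊆ Finset.univ.erase i := by
      intro x hx
      exact Finset.mem_erase.mpr ⟨((G.mem_neighborFinset i x).mp hx).ne', Finset.mem_univ x⟩
    have hcard : (Finset.univ.erase i).card ≤ (G.neighborFinset i).card := by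
      rw [Finset.card_erase_of_mem (Finset.mem_univ _), Finset.card_univ, Fintype.card_fin,
        SimpleGraph.card_neighborFinset_eq_degree, h i]
    have heq := Finset.eq_of_subset_of_card_le hsub hcard
    have : j ∈ Finset.univ.erase i := Finset.mem_erase.mpr ⟨fun hh => hij hh.symm, Finset.mem_univ j⟩
    rw [← heq] at this
    exact (G.mem_neighborFinset i j).mp this

end AuxGraph

section AuxTop

open Finset

lemma distMatrix_top (i j : Fin n) :
    distMatrix (⊤ : SimpleGraph (Fin n)) i j = if i = j then (0:ℝ) else 1 := by
  unfold distMatrix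
  by_cases h : i = j
  · simp [h]
  · have hd : (⊤ : SimpleGraph (Fin n)).dist i j = 1 :=
      SimpleGraph.dist_eq_one_iff_adj.mpr ((SimpleGraph.top_adj i j).mpr h)
    simp [h, hd]

lemma distMatrix_top_sq :
    distMatrix (⊤ : SimpleGraph (Fin n)) * distMatrix (⊤ : SimpleGraph (Fin n)) =
      ((n:ℝ) - 2) • distMatrix (⊤ : SimpleGraph (Fin n)) + ((n:ℝ) - 1) • 1 := by
  ext i j
  rw [Matrix.mul_apply]
  have hsum : ∀ k, distMatrix (⊤ : SimpleGraph (Fin n)) i k *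
      distMatrix (⊤ : SimpleGraph (Fin n)) k j =
      1 - (if i = k then (1:ℝ) else 0) - (if k = j then (1:ℝ) else 0)
        + (if i = k then (1:ℝ) else 0) * (if k = j then (1:ℝ) else 0) := by
    intro k
    rw [distMatrix_top, distMatrix_top]
    by_cases h1 : i = k <;> by_cases h2 : k = j <;> simp [h1, h2]
  simp only [hsum]
  rw [Finset.sum_add_distrib, Finset.sum_sub_distrib, Finset.sum_sub_distrib]
  have e1 : ∑ _k : Fin n, (1:ℝ) = n := by simp
  have e2 : ∑ k : Fin n, (if i = k then (1:ℝ) else 0) = 1 := by simp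
  have e3 : ∑ k : Fin n, (if k = j then (1:ℝ) else 0) = 1 := by simp
  have e4 : ∑ k : Fin n, (if i = k then (1:ℝ) else 0) * (if k = j then (1:ℝ) else 0)
      = if i = j then (1:ℝ) else 0 := by
    simp [ite_and, Finset.sum_ite_eq]
  rw [e1, e2, e3, e4]
  rw [Matrix.add_apply, Matrix.smul_apply, Matrix.smul_apply, Matrix.one_apply, distMatrix_top]
  by_cases h : i = j <;> simp [h] <;> ring

lemma DEE_top (hn : 2 ≤ n) :
    DEE (⊤ : SimpleGraph (Fin n)) =
      Real.exp ((n:ℝ) - 1) + ((n:ℝ) - 1) * Real.exp (-1) := by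
  classical
  have hH := distMatrix_isHermitian (⊤ : SimpleGraph (Fin n))
  have hnu : distEig (⊤ : SimpleGraph (Fin n)) = hH.eigenvalues := rfl
  have hroot : ∀ i, distEig (⊤ : SimpleGraph (Fin n)) i = (n:ℝ) - 1 ∨
      distEig (⊤ : SimpleGraph (Fin n)) i = -1 := by
    intro i
    have hr := auxEigRoot hH ((n:ℝ) - 2) ((n:ℝ) - 1) distMatrix_top_sq i
    rw [← hnu] at hr
    have hfact : (distEig (⊤ : SimpleGraph (Fin n)) i - ((n:ℝ) - 1)) *
        (distEig (⊤ : SimpleGraph (Fin n)) i + 1) = 0 := by nlinarith [hr]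
    rcases mul_eq_zero.mp hfact with h | h
    · left; linarith
    · right; linarith
  have htr : ∑ i, distEig (⊤ : SimpleGraph (Fin n)) i = 0 := by
    rw [hnu, auxSumEig hH]
    have hdg : ∀ i : Fin n, distMatrix (⊤ : SimpleGraph (Fin n)) i i = 0 := fun i => by
      rw [distMatrix_top]; simp
    simp [Matrix.trace, Matrix.diag, hdg]
  set ν := distEig (⊤ : SimpleGraph (Fin n)) with hνdef
  set p : Fin n → Prop := fun i => ν i = (n:ℝ) - 1 with hp
  set S := Finset.univ.filter p with hS
  set Sc := Finset.univ.filter (fun i => ¬ p i) with hSc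
  have hcards : S.card + Sc.card = n := by
    rw [hS, hSc, Finset.card_filter_add_card_filter_not, Finset.card_univ,
      Fintype.card_fin]
  have hsplit : ∀ f : Fin n → ℝ, ∑ i, f i = ∑ i ∈ S, f i + ∑ i ∈ Sc, f i := by
    intro f
    rw [hS, hSc, Finset.sum_filter_add_sum_filter_not]
  have hSval : ∀ i ∈ S, ν i = (n:ℝ) - 1 := fun i hi => (Finset.mem_filter.mp hi).2
  have hScval : ∀ i ∈ Sc, ν i = -1 := by
    intro i hi
    exact (hroot i).resolve_left (Finset.mem_filter.mp hi).2
  have h1 : ∑ i ∈ S, ν i = (S.card : ℝ) * ((n:ℝ) - 1) := by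
    rw [Finset.sum_congr rfl hSval, Finset.sum_const, nsmul_eq_mul]
  have h2 : ∑ i ∈ Sc, ν i = (Sc.card : ℝ) * (-1) := by
    rw [Finset.sum_congr rfl hScval, Finset.sum_const, nsmul_eq_mul]
  have hcard1 : S.card = 1 := by
    have h3 : (S.card : ℝ) * ((n:ℝ) - 1) + (Sc.card : ℝ) * (-1) = 0 := by
      rw [← h1, ← h2, ← hsplit]; exact htr
    have h4 : (Sc.card : ℝ) = (n : ℝ) - S.card := by
      have hc2 : ((S.card : ℕ) : ℝ) + ((Sc.card : ℕ) : ℝ) = (n : ℝ) := by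
        exact_mod_cast hcards
      linarith
    rw [h4] at h3
    have h5 : (S.card : ℝ) * (n : ℝ) = (n : ℝ) := by ring_nf at h3 ⊢; linarith
    have hnpos : (0:ℝ) < (n:ℝ) := by exact_mod_cast (show 0 < n by omega)
    have h6 : (S.card : ℝ) = 1 := by
      have h5' : (S.card : ℝ) * (n:ℝ) = 1 * (n:ℝ) := by rw [one_mul]; exact h5
      exact mul_right_cancel₀ (ne_of_gt hnpos) h5'
    exact_mod_cast h6
  have hcardc : Sc.card = n - 1 := by omega
  have hA : ∑ i ∈ S, Real.exp (ν i) = (S.card : ℕ) • Real.exp ((n:ℝ) - 1) := by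
    rw [Finset.sum_congr rfl (fun i hi => by rw [hSval i hi]), Finset.sum_const]
  have hB : ∑ i ∈ Sc, Real.exp (ν i) = (Sc.card : ℕ) • Real.exp (-1) := by
    rw [Finset.sum_congr rfl (fun i hi => by rw [hScval i hi]), Finset.sum_const]
  have hcast : ((n - 1 : ℕ) : ℝ) = (n : ℝ) - 1 := by
    rw [Nat.cast_sub (by omega), Nat.cast_one]
  unfold DEE
  rw [← hνdef, hsplit (fun i => Real.exp (ν i)), hA, hB, hcard1, hcardc]
  rw [one_smul, nsmul_eq_mul, hcast]

end AuxTop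

open Matrix in
/-- **Theorem 3 (Shang).** For a connected graph `G` on `n ≥ 2` vertices with maximum degree
`Δ₁` and second maximum degree `Δ₂`,
`DEE(G) ≥ e^{√((2n-2-Δ₁)(2n-2-Δ₂))} + (n-1) e^{-√((2-Δ₁/(n-1))(2-Δ₂/(n-1)))}`,
with equality iff `G = Kₙ`. -/
theorem distance_estrada_lower_bound_degrees {n : ℕ} (hn : 2 ≤ n)
    (G : SimpleGraph (Fin n)) [DecidableRel G.Adj] (hconn : G.Connected)
    (Δ₁ Δ₂ : ℕ)
    (hΔ : ∃ u : Fin n, G.degree u = Δ₁ ∧ (∀ w, G.degree w ≤ Δ₁) ∧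
      (∃ v, v ≠ u ∧ G.degree v = Δ₂) ∧ ∀ w, w ≠ u → G.degree w ≤ Δ₂) :
    Real.exp (Real.sqrt ((2 * (n : ℝ) - 2 - Δ₁) * (2 * (n : ℝ) - 2 - Δ₂))) +
      ((n : ℝ) - 1) * Real.exp (-Real.sqrt ((2 - (Δ₁ : ℝ) / ((n : ℝ) - 1)) *
        (2 - (Δ₂ : ℝ) / ((n : ℝ) - 1)))) ≤ DEE G ∧
    (Real.exp (Real.sqrt ((2 * (n : ℝ) - 2 - Δ₁) * (2 * (n : ℝ) - 2 - Δ₂))) +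
      ((n : ℝ) - 1) * Real.exp (-Real.sqrt ((2 - (Δ₁ : ℝ) / ((n : ℝ) - 1)) *
        (2 - (Δ₂ : ℝ) / ((n : ℝ) - 1)))) = DEE G ↔ G = ⊤) := by
  classical
  obtain ⟨u, hu1, hu2, ⟨v, hvu, hv1⟩, hw2⟩ := hΔ
  have hH : (distMatrix G).IsHermitian := distMatrix_isHermitian G
  have hνeq : hH.eigenvalues = distEig G := rfl
  have hnR : (2:ℝ) ≤ (n:ℝ) := by exact_mod_cast hn
  have hn1R : (1:ℝ) ≤ (n:ℝ) - 1 := by linarith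
  have hn0R : (0:ℝ) < (n:ℝ) - 1 := by linarith
  have hnpos : (0:ℝ) < (n:ℝ) := by linarith
  have hcast : ((n - 1 : ℕ) : ℝ) = (n:ℝ) - 1 := by
    rw [Nat.cast_sub (by omega), Nat.cast_one]
  -- degree facts
  have hdeg_le : ∀ w : Fin n, (G.degree w : ℝ) ≤ (n:ℝ) - 1 := by
    intro w
    have h := G.degree_lt_card_verts w
    rw [Fintype.card_fin] at h
    have h2 : G.degree w ≤ n - 1 := by omega
    calc (G.degree w : ℝ) ≤ ((n - 1 : ℕ) : ℝ) := by exact_mod_cast h2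
      _ = (n:ℝ) - 1 := hcast
  have hΔ₁R : (Δ₁:ℝ) ≤ (n:ℝ) - 1 := by rw [← hu1]; exact hdeg_le u
  have hΔ₂Δ₁ : (Δ₂:ℝ) ≤ (Δ₁:ℝ) := by
    have : Δ₂ ≤ Δ₁ := by rw [← hv1]; exact hu2 v
    exact_mod_cast this
  have hΔ₁pos : (1:ℝ) ≤ (Δ₁:ℝ) := by
    rw [← hu1]; exact_mod_cast auxDegPos G hconn hn u
  set a : ℝ := 2 * (n:ℝ) - 2 - (Δ₁:ℝ) with ha_def
  set b : ℝ := 2 * (n:ℝ) - 2 - (Δ₂:ℝ) with hb_def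
  have hapos : 0 < a := by rw [ha_def]; linarith
  have hab : a ≤ b := by rw [ha_def, hb_def]; linarith
  have hbpos : 0 < b := lt_of_lt_of_le hapos hab
  have habpos : 0 < a * b := mul_pos hapos hbpos
  set s : ℝ := Real.sqrt (a * b) with hs_def
  have hs0 : 0 ≤ s := Real.sqrt_nonneg _
  have hsqrt2 : Real.sqrt ((2 - (Δ₁:ℝ)/((n:ℝ)-1)) * (2 - (Δ₂:ℝ)/((n:ℝ)-1)))
      = s / ((n:ℝ)-1) := by
    have e1 : (2 - (Δ₁:ℝ)/((n:ℝ)-1)) * (2 - (Δ₂:ℝ)/((n:ℝ)-1))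
        = (a*b)/(((n:ℝ)-1)^2) := by
      rw [ha_def, hb_def]; field_simp
    rw [e1, Real.sqrt_div habpos.le, Real.sqrt_sq hn0R.le, ← hs_def]
  rw [hsqrt2]
  -- trace zero
  have htrace : ∑ i, distEig G i = 0 := by
    have h0 := auxSumEig hH
    rw [hνeq] at h0
    rw [h0]
    simp [Matrix.trace, Matrix.diag, distMatrix, SimpleGraph.dist_self]
  -- max eigenvalue
  obtain ⟨i₀, -, hmax⟩ := Finset.exists_max_image (Finset.univ : Finset (Fin n)) (distEig G)
    ⟨⟨0, by omega⟩, Finset.mem_univ _⟩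
  have hmax' : ∀ i, distEig G i ≤ distEig G i₀ := fun i => hmax i (Finset.mem_univ i)
  set lam : ℝ := distEig G i₀ with hlam_def
  set T : ℝ := ∑ i, ∑ j, distMatrix G i j with hT_def
  have hT1 : T ≤ lam * n := by
    obtain ⟨hq1, hq2⟩ := auxQuadForm hH (fun _ => 1)
    rw [hνeq] at hq1
    set y : Fin n → ℝ :=
      star (hH.eigenvectorUnitary : Matrix (Fin n) (Fin n) ℝ) *ᵥ (fun _ => 1) with hy
    have hx1 : (fun _ : Fin n => (1:ℝ)) ⬝ᵥ (distMatrix G *ᵥ (fun _ => 1)) = T := by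
      rw [hT_def]
      simp [dotProduct, Matrix.mulVec]
    have hx2 : (fun _ : Fin n => (1:ℝ)) ⬝ᵥ (fun _ : Fin n => (1:ℝ)) = (n:ℝ) := by
      simp [dotProduct]
    rw [hx1] at hq1
    rw [hx2] at hq2
    have step : ∑ i, distEig G i * y i ^ 2 ≤ ∑ i, lam * y i ^ 2 :=
      Finset.sum_le_sum (fun i _ => mul_le_mul_of_nonneg_right (hmax' i) (sq_nonneg (y i)))
    have hfin : ∑ i, lam * y i ^ 2 = lam * n := by rw [← Finset.mul_sum, ← hq2]
    rw [hq1]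
    linarith [step, hfin]
  -- lower bound on T via degrees
  have hL_le_T : ∑ i, ∑ j, lowM G i j ≤ T := by
    rw [hT_def]
    exact Finset.sum_le_sum (fun i _ =>
      Finset.sum_le_sum (fun j _ => lowM_le_dist G hconn i j))
  have hrowdeg : ∑ i, ∑ j, lowM G i j
      = (n:ℝ) * (2*(n:ℝ) - 2) - ∑ w, (G.degree w : ℝ) := by
    rw [Finset.sum_congr rfl (fun i _ => sum_lowM G i), Finset.sum_sub_distrib,
      Finset.sum_const, Finset.card_univ, Fintype.card_fin, nsmul_eq_mul]
  have hsplitdeg : ∑ w, (G.degree w : ℝ)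
      = (Δ₁:ℝ) + ∑ w ∈ Finset.univ.erase u, (G.degree w : ℝ) := by
    rw [← Finset.add_sum_erase _ _ (Finset.mem_univ u)]
    congr 1
    exact_mod_cast hu1
  have hc_eraseu : ((Finset.univ.erase u).card : ℝ) = (n:ℝ) - 1 := by
    rw [Finset.card_erase_of_mem (Finset.mem_univ _), Finset.card_univ, Fintype.card_fin, hcast]
  have hDSle : ∑ w ∈ Finset.univ.erase u, (G.degree w:ℝ) ≤ ((n:ℝ)-1) * Δ₂ := by
    calc ∑ w ∈ Finset.univ.erase u, (G.degree w:ℝ)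
        ≤ ∑ _w ∈ Finset.univ.erase u, (Δ₂:ℝ) :=
          Finset.sum_le_sum (fun w hw => by
            exact_mod_cast hw2 w (Finset.mem_erase.mp hw).1)
      _ = ((n:ℝ)-1) * Δ₂ := by rw [Finset.sum_const, nsmul_eq_mul, hc_eraseu]
  have hT2 : a + ((n:ℝ)-1) * b ≤ T := by
    have e : a + ((n:ℝ)-1)*b = (n:ℝ)*(2*(n:ℝ)-2) - ((Δ₁:ℝ) + ((n:ℝ)-1)*(Δ₂:ℝ)) := by
      rw [ha_def, hb_def]; ring
    rw [e]
    rw [hrowdeg] at hL_le_T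
    linarith [hsplitdeg, hDSle, hL_le_T]
  have hns : (n:ℝ) * s ≤ a + ((n:ℝ)-1)*b := by
    rw [hs_def]; exact auxAmgm hapos hab hnR
  have hslam : s ≤ lam := by
    have h8 : s * n ≤ lam * n := by linarith [hT1, hT2, hns]
    exact le_of_mul_le_mul_right h8 hnpos
  have hlam0 : 0 ≤ lam := le_trans hs0 hslam
  -- Jensen
  have hc' : ((Finset.univ.erase i₀).card : ℝ) = (n:ℝ) - 1 := by
    rw [Finset.card_erase_of_mem (Finset.mem_univ _), Finset.card_univ, Fintype.card_fin, hcast]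
  have hmmul : ((n:ℝ)-1) * (-(lam/((n:ℝ)-1))) = -lam := by field_simp
  have hm : ∑ i ∈ Finset.univ.erase i₀, distEig G i
      = ((Finset.univ.erase i₀).card : ℝ) * (-(lam/((n:ℝ)-1))) := by
    have h9 : lam + ∑ i ∈ Finset.univ.erase i₀, distEig G i = 0 := by
      rw [hlam_def, Finset.add_sum_erase _ _ (Finset.mem_univ i₀)]; exact htrace
    rw [hc', hmmul]
    linarith
  have hjen := auxJensen (Finset.univ.erase i₀) (distEig G) (-(lam/((n:ℝ)-1))) hm
  rw [hc'] at hjen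
  have hDEE : DEE G = Real.exp lam + ∑ i ∈ Finset.univ.erase i₀, Real.exp (distEig G i) := by
    unfold DEE
    rw [← Finset.add_sum_erase _ (fun i => Real.exp (distEig G i)) (Finset.mem_univ i₀),
      hlam_def]
  have hFlam : Real.exp lam + ((n:ℝ)-1) * Real.exp (-(lam/((n:ℝ)-1))) ≤ DEE G := by
    rw [hDEE]; linarith [hjen]
  have hFs := auxMono hn1R hs0 hslam
  refine ⟨by linarith [hFs, hFlam], fun heq => ?_, fun htop => ?_⟩
  · -- equality implies complete graph
    have hlam_eq : lam = s := by
      by_contra hne'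
      have hlt : s < lam := lt_of_le_of_ne hslam (fun hh => hne' hh.symm)
      have := auxMonoStrict hn1R hs0 hlt
      linarith [hFlam]
    rw [hDEE] at heq
    rw [hlam_eq] at hFlam hFs
    have hjeq : ((n:ℝ)-1) * Real.exp (-(lam/((n:ℝ)-1)))
        = ∑ i ∈ Finset.univ.erase i₀, Real.exp (distEig G i) := by
      rw [hlam_eq] at heq ⊢
      linarith [heq]
    have hall : ∀ i ∈ Finset.univ.erase i₀, distEig G i = -(lam/((n:ℝ)-1)) := by
      apply auxJensenEq _ _ _ hm
      rw [hc']; exact hjeq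
    have hTeq : T = a + ((n:ℝ)-1) * b := by
      have h10 : lam * n = n * s := by rw [hlam_eq]; ring
      linarith [hT1, hT2, hns]
    have hamgmeq : (n:ℝ) * s = a + ((n:ℝ)-1)*b := by
      have h10 : lam * n = n * s := by rw [hlam_eq]; ring
      linarith [hT1, hT2, hns]
    have habe : a = b := auxAmgmEq hapos hab hnR (by rw [hs_def] at hamgmeq; exact hamgmeq)
    have hLeq : ∑ i, ∑ j, lowM G i j = T := by
      have e : a + ((n:ℝ)-1)*b = (n:ℝ)*(2*(n:ℝ)-2) - ((Δ₁:ℝ) + ((n:ℝ)-1)*(Δ₂:ℝ)) := by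
        rw [ha_def, hb_def]; ring
      rw [hrowdeg]
      rw [hrowdeg] at hL_le_T
      linarith [hsplitdeg, hDSle, hTeq, hL_le_T]
    have hdegsum_eq : ∑ w ∈ Finset.univ.erase u, (G.degree w:ℝ) = ((n:ℝ)-1)*(Δ₂:ℝ) := by
      have e : a + ((n:ℝ)-1)*b = (n:ℝ)*(2*(n:ℝ)-2) - ((Δ₁:ℝ) + ((n:ℝ)-1)*(Δ₂:ℝ)) := by
        rw [ha_def, hb_def]; ring
      rw [hrowdeg] at hLeq
      linarith [hsplitdeg, hTeq, hLeq]
    have hdeg_erase : ∀ w ∈ Finset.univ.erase u, (G.degree w : ℝ) = (Δ₂:ℝ) := by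
      have hpt : ∀ w ∈ Finset.univ.erase u, (G.degree w:ℝ) ≤ (Δ₂:ℝ) := fun w hw => by
        exact_mod_cast hw2 w (Finset.mem_erase.mp hw).1
      have hconst : ∑ _w ∈ Finset.univ.erase u, (Δ₂:ℝ) = ((n:ℝ)-1)*(Δ₂:ℝ) := by
        rw [Finset.sum_const, nsmul_eq_mul, hc_eraseu]
      exact (Finset.sum_eq_sum_iff_of_le hpt).mp (by rw [hdegsum_eq, hconst])
    have hΔeq : (Δ₁:ℝ) = (Δ₂:ℝ) := by
      rw [ha_def, hb_def] at habe; linarith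
    have hdeg_all : ∀ w, (G.degree w : ℝ) = (Δ₂:ℝ) := by
      intro w
      by_cases hwu : w = u
      · rw [hwu, show ((G.degree u : ℕ):ℝ) = (Δ₁:ℝ) from by exact_mod_cast hu1]
        exact hΔeq
      · exact hdeg_erase w (Finset.mem_erase.mpr ⟨hwu, Finset.mem_univ w⟩)
    have hrow_eq : ∀ i ∈ (Finset.univ : Finset (Fin n)),
        ∑ j, lowM G i j = ∑ j, distMatrix G i j := by
      apply (Finset.sum_eq_sum_iff_of_le (fun i _ =>
        Finset.sum_le_sum (fun j _ => lowM_le_dist G hconn i j))).mp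
      rw [hLeq, hT_def]
      rfl
    have hD_eq : ∀ i j, distMatrix G i j = lowM G i j := by
      intro i j
      exact ((Finset.sum_eq_sum_iff_of_le (fun j _ => lowM_le_dist G hconn i j)).mp
        (hrow_eq i (Finset.mem_univ i)) j (Finset.mem_univ j)).symm
    have htrsq : ∑ i, distEig G i ^ 2 = (n:ℝ) * (4*(n:ℝ) - 4 - 3*(Δ₂:ℝ)) := by
      have h0 := auxSqEig hH
      rw [hνeq] at h0
      rw [h0]
      calc (distMatrix G * distMatrix G).trace
          = ∑ i, (distMatrix G * distMatrix G) i i := rfl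
        _ = ∑ i, ∑ j, distMatrix G i j * distMatrix G j i := by
            apply Finset.sum_congr rfl; intro i _; rw [Matrix.mul_apply]
        _ = ∑ i, ∑ j, lowM G i j ^ 2 := by
            apply Finset.sum_congr rfl; intro i _
            apply Finset.sum_congr rfl; intro j _
            rw [hD_eq, hD_eq, ← lowM_symm, sq]
        _ = ∑ i, (4*(n:ℝ) - 4 - 3*(G.degree i:ℝ)) :=
            Finset.sum_congr rfl (fun i _ => sum_lowM_sq G i)
        _ = ∑ _i : Fin n, (4*(n:ℝ) - 4 - 3*(Δ₂:ℝ)) := by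
            apply Finset.sum_congr rfl; intro i _; rw [hdeg_all i]
        _ = (n:ℝ) * (4*(n:ℝ) - 4 - 3*(Δ₂:ℝ)) := by
            rw [Finset.sum_const, Finset.card_univ, Fintype.card_fin, nsmul_eq_mul]
    have hsum_sq : ∑ i, distEig G i ^ 2 = lam^2 + ((n:ℝ)-1) * (lam/((n:ℝ)-1))^2 := by
      rw [← Finset.add_sum_erase _ (fun i => distEig G i ^ 2) (Finset.mem_univ i₀)]
      have e2 : ∑ i ∈ Finset.univ.erase i₀, distEig G i ^ 2
          = ((n:ℝ)-1) * (lam/((n:ℝ)-1))^2 := by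
        rw [Finset.sum_congr rfl (fun i hi => by rw [hall i hi])]
        rw [Finset.sum_const, nsmul_eq_mul, hc']
        ring
      rw [e2, ← hlam_def]
    have hlam_a : lam = a := by
      rw [hlam_eq, hs_def, show a*b = a^2 from by rw [habe]; ring, Real.sqrt_sq hapos.le]
    have hδ : (Δ₂:ℝ) = (n:ℝ) - 1 := by
      have hE : lam^2 + ((n:ℝ)-1)*(lam/((n:ℝ)-1))^2 = (n:ℝ) * (4*(n:ℝ)-4-3*(Δ₂:ℝ)) := by
        rw [← hsum_sq, htrsq]
      rw [hlam_a, ha_def, hΔeq] at hE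
      have hdiv : ((n:ℝ)-1) * ((2*(n:ℝ)-2-(Δ₂:ℝ))/((n:ℝ)-1))^2
          = (2*(n:ℝ)-2-(Δ₂:ℝ))^2 / ((n:ℝ)-1) := by
        field_simp
      rw [hdiv] at hE
      have hE' : (2*(n:ℝ)-2-(Δ₂:ℝ))^2 * ((n:ℝ) - 1) + (2*(n:ℝ)-2-(Δ₂:ℝ))^2
          = (n:ℝ) * (4*(n:ℝ)-4-3*(Δ₂:ℝ)) * ((n:ℝ)-1) := by
        have hcanc : (2*(n:ℝ)-2-(Δ₂:ℝ))^2 / ((n:ℝ)-1) * ((n:ℝ)-1)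
            = (2*(n:ℝ)-2-(Δ₂:ℝ))^2 := div_mul_cancel₀ _ (ne_of_gt hn0R)
        have h := congrArg (fun z : ℝ => z * ((n:ℝ)-1)) hE
        simp only [add_mul] at h
        rw [hcanc] at h
        linarith [h]
      have hδ2 : (Δ₂:ℝ)^2 * (n:ℝ) = ((n:ℝ)-1) * (Δ₂:ℝ) * (n:ℝ) := by
        linear_combination hE'
      have hδ3 : (Δ₂:ℝ)^2 = ((n:ℝ)-1) * (Δ₂:ℝ) :=
        mul_right_cancel₀ (ne_of_gt hnpos) hδ2
      have hδpos : (1:ℝ) ≤ (Δ₂:ℝ) := by rw [← hΔeq]; exact hΔ₁pos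
      have hfac : (Δ₂:ℝ) * ((Δ₂:ℝ) - ((n:ℝ)-1)) = 0 := by linear_combination hδ3
      rcases mul_eq_zero.mp hfac with h | h
      · exfalso; linarith
      · linarith
    have hdeg_nat : ∀ w, G.degree w = n - 1 := by
      intro w
      have : (G.degree w : ℝ) = ((n-1:ℕ):ℝ) := by rw [hdeg_all w, hδ, hcast]
      exact_mod_cast this
    exact auxTopOfDeg G hdeg_nat
  · -- complete graph gives equality
    have hadj : ∀ i j, G.Adj i j ↔ i ≠ j := by
      rw [htop]; intro i j; exact SimpleGraph.top_adj i j
    have hΔ₁n : Δ₁ = n - 1 := by rw [← hu1, auxDegTop G hadj u]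
    have hΔ₂n : Δ₂ = n - 1 := by rw [← hv1, auxDegTop G hadj v]
    have hΔ₁r : (Δ₁:ℝ) = (n:ℝ) - 1 := by rw [hΔ₁n, hcast]
    have hΔ₂r : (Δ₂:ℝ) = (n:ℝ) - 1 := by rw [hΔ₂n, hcast]
    have hsval : s = (n:ℝ) - 1 := by
      rw [hs_def, ha_def, hb_def, hΔ₁r, hΔ₂r,
        show 2*(n:ℝ)-2-((n:ℝ)-1) = (n:ℝ)-1 from by ring]
      exact Real.sqrt_mul_self hn0R.le
    rw [htop, DEE_top hn, hsval,
      show ((n:ℝ)-1)/((n:ℝ)-1) = 1 from div_self (ne_of_gt hn0R)]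

end DistanceEstrada
end

section
/- Let G be a connected simple graph on n ≥ 2 vertices with diameter ρ. Then DEE(G) < n - 1 + e^{√(n(n-1)ρ² - 1)}. -/
namespace DistanceEstrada

variable {n : ℕ}

/-! ### Auxiliary analytic lemmas -/

lemma aux_quad_le_exp {x : ℝ} (hx : 0 ≤ x) : 1 + x + x ^ 2 / 2 ≤ Real.exp x := by
  have : (1:ℝ) + x + x ^ 2 / 2 = ∑ i ∈ Finset.range 3, x ^ i / i.factorial := by
    simp [Finset.sum_range_succ]
  rw [this]; exact Real.sum_le_exp_of_nonneg hx 3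

lemma aux_exp_le_quad_neg {x : ℝ} (hx : x ≤ 0) : Real.exp x ≤ 1 + x + x ^ 2 / 2 := by
  have h := aux_quad_le_exp (x := -x) (by linarith)
  have hpos : (0:ℝ) < 1 - x + x ^ 2 / 2 := by nlinarith
  have he : Real.exp x * Real.exp (-x) = 1 := by rw [← Real.exp_add]; simp
  nlinarith [Real.exp_pos x, Real.exp_pos (-x)]

lemma aux_exp_eq_tsum (x : ℝ) : Real.exp x = ∑' n : ℕ, x ^ n / n.factorial := by
  rw [Real.exp_eq_exp_ℝ, NormedSpace.exp_eq_tsum_div]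

set_option maxHeartbeats 1000000 in
lemma aux_exp_sub_linear_eq (x : ℝ) :
    Real.exp x - 1 - x = ∑' n : ℕ, x ^ (n + 2) / (n + 2).factorial := by
  have hs : Summable (fun n : ℕ => x ^ n / n.factorial) := Real.summable_pow_div_factorial x
  have h := Summable.sum_add_tsum_nat_add 2 hs
  rw [aux_exp_eq_tsum x]
  simp [Finset.sum_range_succ] at h
  linarith [h]

set_option maxHeartbeats 2000000 in
lemma aux_exp_sub_linear_le {x b : ℝ} (hx : 0 ≤ x) (hxb : x ≤ b) (hb : 0 < b) :
    Real.exp x - 1 - x ≤ x ^ 2 / b ^ 2 * (Real.exp b - 1 - b) := by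
  rw [aux_exp_sub_linear_eq x, aux_exp_sub_linear_eq b]
  have hsx : Summable (fun n : ℕ => x ^ (n + 2) / (n + 2).factorial) :=
    (summable_nat_add_iff 2).mpr (Real.summable_pow_div_factorial x)
  have hsb : Summable (fun n : ℕ => b ^ (n + 2) / (n + 2).factorial) :=
    (summable_nat_add_iff 2).mpr (Real.summable_pow_div_factorial b)
  rw [← tsum_mul_left]
  refine Summable.tsum_le_tsum (fun n => ?_) hsx (hsb.mul_left _)
  have hfac : (0:ℝ) < (n + 2).factorial := by positivity
  have h1 : x ^ (n + 2) ≤ x ^ 2 / b ^ 2 * b ^ (n + 2) := by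
    have hxn : x ^ n ≤ b ^ n := pow_le_pow_left₀ hx hxb n
    have h2 : x ^ 2 * x ^ n ≤ x ^ 2 * b ^ n :=
      mul_le_mul_of_nonneg_left hxn (by positivity)
    have h3 : x ^ 2 / b ^ 2 * b ^ (n + 2) = x ^ 2 * b ^ n := by
      field_simp
      ring
    rw [h3, pow_add]
    linarith [h2]
  calc x ^ (n + 2) / ((n + 2).factorial : ℝ)
      ≤ (x ^ 2 / b ^ 2 * b ^ (n + 2)) / ((n + 2).factorial : ℝ) :=
        div_le_div_of_nonneg_right h1 hfac.le
    _ = x ^ 2 / b ^ 2 * (b ^ (n + 2) / ((n + 2).factorial : ℝ)) := by ring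

lemma aux_exp_le_one_add_add {b x : ℝ} (hb : 0 < b) (h1 : -b ≤ x) (h2 : x ≤ b) :
    Real.exp x ≤ 1 + x + (Real.exp b - 1 - b) / b ^ 2 * x ^ 2 := by
  rcases le_or_gt x 0 with h | h
  · have hq := aux_exp_le_quad_neg h
    have hc : (1:ℝ)/2 ≤ (Real.exp b - 1 - b) / b ^ 2 := by
      rw [le_div_iff₀ (by positivity)]
      nlinarith [aux_quad_le_exp hb.le]
    nlinarith [sq_nonneg x]
  · have hq := aux_exp_sub_linear_le h.le h2 hb
    have he : x ^ 2 / b ^ 2 * (Real.exp b - 1 - b) = (Real.exp b - 1 - b) / b ^ 2 * x ^ 2 := by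
      ring
    linarith [he ▸ hq]

/-! ### Trace identities -/

section trace
variable {m : ℕ} {A : Matrix (Fin m) (Fin m) ℝ}

lemma star_unitary_mul_cancel (hA : A.IsHermitian) (X : Matrix (Fin m) (Fin m) ℝ) :
    (star (hA.eigenvectorUnitary : Matrix (Fin m) (Fin m) ℝ)) *
      ((hA.eigenvectorUnitary : Matrix (Fin m) (Fin m) ℝ) * X) = X := by
  rw [← Matrix.mul_assoc, Matrix.mem_unitaryGroup_iff'.mp hA.eigenvectorUnitary.2, Matrix.one_mul]

lemma trace_eq_sum_eig (hA : A.IsHermitian) : A.trace = ∑ i, hA.eigenvalues i := by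
  nth_rewrite 1 [hA.spectral_theorem]
  rw [Unitary.conjStarAlgAut_apply, Matrix.trace_mul_cycle, Matrix.mem_unitaryGroup_iff'.mp hA.eigenvectorUnitary.2,
    Matrix.one_mul, Matrix.trace_diagonal]
  simp [RCLike.ofReal_real_eq_id]

lemma trace_sq_eq_sum_sq (hA : A.IsHermitian) :
    (A * A).trace = ∑ i, hA.eigenvalues i ^ 2 := by
  have key : A * A = (hA.eigenvectorUnitary : Matrix (Fin m) (Fin m) ℝ) *
      (Matrix.diagonal (RCLike.ofReal ∘ hA.eigenvalues) *
        Matrix.diagonal (RCLike.ofReal ∘ hA.eigenvalues)) *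
      star (hA.eigenvectorUnitary : Matrix (Fin m) (Fin m) ℝ) := by
    conv_lhs => rw [hA.spectral_theorem, Unitary.conjStarAlgAut_apply]
    simp only [Matrix.mul_assoc]
    rw [star_unitary_mul_cancel hA]
  rw [key, Matrix.trace_mul_cycle, Matrix.mem_unitaryGroup_iff'.mp hA.eigenvectorUnitary.2,
    Matrix.one_mul, Matrix.diagonal_mul_diagonal, Matrix.trace_diagonal]
  simp [RCLike.ofReal_real_eq_id, sq]

end trace

lemma sum_distEig (G : SimpleGraph (Fin n)) : ∑ i, distEig G i = 0 := by
  have h := trace_eq_sum_eig (distMatrix_isHermitian G)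
  rw [show (distMatrix G).trace = 0 from ?_] at h
  · exact h.symm
  · simp [Matrix.trace, Matrix.diag, distMatrix, SimpleGraph.dist_self]

lemma sum_sq_distEig (G : SimpleGraph (Fin n)) :
    ∑ i, distEig G i ^ 2 = ∑ i, ∑ j, (G.dist i j : ℝ) ^ 2 := by
  have h := trace_sq_eq_sum_sq (distMatrix_isHermitian G)
  unfold distEig
  rw [← h]
  simp only [Matrix.trace, Matrix.diag, Matrix.mul_apply, distMatrix]
  refine Finset.sum_congr rfl fun i _ => Finset.sum_congr rfl fun j _ => ?_
  rw [SimpleGraph.dist_comm (u := j)]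
  ring

lemma eig_complete (hn : 2 ≤ n) (G : SimpleGraph (Fin n))
    (hcomp : ∀ i j : Fin n, i ≠ j → G.Adj i j) (k : Fin n) :
    distEig G k = -1 ∨ distEig G k = (n : ℝ) - 1 := by
  have hA := distMatrix_isHermitian G
  have hv := hA.mulVec_eigenvectorBasis k
  set lam : ℝ := hA.eigenvalues k with hlam
  have hlam' : distEig G k = lam := rfl
  set v : Fin n → ℝ := ⇑(hA.eigenvectorBasis k) with hvdef
  have hvne : v ≠ 0 := by
    intro h0
    apply hA.eigenvectorBasis.orthonormal.ne_zero k
    apply PiLp.ext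
    intro i
    exact congrFun h0 i
  have hd : ∀ i j : Fin n, i ≠ j → G.dist i j = 1 := fun i j h =>
    SimpleGraph.dist_eq_one_iff_adj.mpr (hcomp i j h)
  have hmv : ∀ i, (∑ j, v j) - v i = lam * v i := by
    intro i
    have h1 := congrFun hv i
    rw [Matrix.mulVec, dotProduct] at h1
    have h2 : ∀ j : Fin n, distMatrix G i j * v j = v j - (if j = i then v j else 0) := by
      intro j
      by_cases hji : j = i
      · subst hji
        simp [distMatrix, SimpleGraph.dist_self]
      · simp [distMatrix, hd i j (Ne.symm hji), hji]
    rw [Finset.sum_congr rfl (fun j _ => h2 j), Finset.sum_sub_distrib,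
      Finset.sum_ite_eq' Finset.univ i (fun j => v j)] at h1
    simpa using h1
  rw [hlam']
  by_cases hl : lam = -1
  · exact Or.inl hl
  · right
    have hne : lam + 1 ≠ 0 := fun h => hl (by linarith)
    have hconst : ∀ i, (lam + 1) * v i = ∑ j, v j := by
      intro i
      have h := hmv i
      ring_nf
      ring_nf at h ⊢
      linarith [h]
    have hci : ∀ i i' : Fin n, v i = v i' := by
      intro i i'
      have h1 := hconst i
      have h2 := hconst i'
      exact mul_left_cancel₀ hne (by linarith)
    have hnpos : 0 < n := by omega
    have i0 : Fin n := ⟨0, hnpos⟩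
    have hvi0 : v i0 ≠ 0 := by
      intro h0
      apply hvne
      funext i
      rw [Pi.zero_apply, hci i i0, h0]
    have hsum : ∑ j, v j = (n : ℝ) * v i0 := by
      rw [Finset.sum_congr rfl (fun j _ => hci j i0)]
      simp [Finset.card_univ, mul_comm]
    have h3 := hconst i0
    rw [hsum] at h3
    have h4 : (lam + 1 - n) * v i0 = 0 := by ring_nf; ring_nf at h3; linarith
    rcases mul_eq_zero.mp h4 with h | h
    · linarith [h]
    · exact absurd h hvi0

/-- **Theorem 5 (Shang).** For a connected graph `G` on `n ≥ 2` vertices with diameter `ρ`,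
`DEE(G) < n - 1 + e^{√(n(n-1)ρ² - 1)}`. -/
theorem distance_estrada_upper_bound_diam {n : ℕ} (hn : 2 ≤ n)
    (G : SimpleGraph (Fin n)) (hconn : G.Connected) :
    DEE G < (n : ℝ) - 1 +
      Real.exp (Real.sqrt ((n : ℝ) * ((n : ℝ) - 1) * (G.diam : ℝ) ^ 2 - 1)) := by
  classical
  have hnR : (2:ℝ) ≤ (n:ℝ) := by exact_mod_cast hn
  have hnt : Nontrivial (Fin n) := Fin.nontrivial_iff_two_le.mpr hn
  have hE : G.ediam ≠ ⊤ := by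
    obtain ⟨u, v, huv⟩ := G.exists_edist_eq_ediam_of_finite
    rw [← huv]
    exact SimpleGraph.edist_ne_top_iff_reachable.mpr (hconn u v)
  have hρ : 1 ≤ G.diam := by
    rcases Nat.eq_zero_or_pos G.diam with h | h
    · exfalso
      rcases SimpleGraph.diam_eq_zero.mp h with h' | h'
      · exact hE h'
      · exact (not_subsingleton (Fin n)) h'
    · omega
  have hρR : (1:ℝ) ≤ (G.diam : ℝ) := by exact_mod_cast hρ
  by_cases hcomp : ∀ i j : Fin n, i ≠ j → G.Adj i j
  · -- complete graph case
    set T : Finset (Fin n) := Finset.univ.filter (fun k => distEig G k = (n:ℝ) - 1) with hT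
    have hmemT : ∀ k, k ∈ T ↔ distEig G k = (n:ℝ) - 1 := by
      intro k; simp [hT]
    have hmemT' : ∀ k, k ∉ T → distEig G k = -1 := by
      intro k hk
      rcases eig_complete hn G hcomp k with h | h
      · exact h
      · exact absurd ((hmemT k).mpr h) hk
    have hTle : T.card ≤ n := by
      calc T.card ≤ Finset.univ.card := Finset.card_le_univ T
        _ = n := by simp
    have hcc : ((Tᶜ).card : ℝ) = (n:ℝ) - T.card := by
      rw [Finset.card_compl]
      have : T.card ≤ Fintype.card (Fin n) := by simpa using hTle
      push_cast [Nat.cast_sub this]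
      simp
    have h1 : ∑ k ∈ T, distEig G k = (T.card : ℝ) * ((n:ℝ) - 1) := by
      rw [Finset.sum_congr rfl (fun k hk => (hmemT k).mp hk), Finset.sum_const, nsmul_eq_mul]
    have h2 : ∑ k ∈ Tᶜ, distEig G k = ((Tᶜ).card : ℝ) * (-1) := by
      rw [Finset.sum_congr rfl (fun k hk => hmemT' k (Finset.mem_compl.mp hk)),
        Finset.sum_const, nsmul_eq_mul]
    have h0 : ∑ k ∈ T, distEig G k + ∑ k ∈ Tᶜ, distEig G k = 0 := by
      rw [Finset.sum_add_sum_compl T (distEig G)]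
      exact sum_distEig G
    rw [h1, h2, hcc] at h0
    have hTcard : (T.card : ℝ) = 1 := by
      have hne : (n:ℝ) ≠ 0 := by linarith
      have : (T.card : ℝ) * (n:ℝ) = 1 * (n:ℝ) := by ring_nf; ring_nf at h0; linarith
      exact mul_right_cancel₀ hne this
    have hDEE : DEE G = Real.exp ((n:ℝ) - 1) + ((n:ℝ) - 1) * Real.exp (-1) := by
      have e1 : ∑ k ∈ T, Real.exp (distEig G k) = (T.card : ℝ) * Real.exp ((n:ℝ) - 1) := by
        have : ∀ k ∈ T, Real.exp (distEig G k) = Real.exp ((n:ℝ) - 1) := by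
          intro k hk; rw [(hmemT k).mp hk]
        rw [Finset.sum_congr rfl this, Finset.sum_const, nsmul_eq_mul]
      have e2 : ∑ k ∈ Tᶜ, Real.exp (distEig G k) = ((Tᶜ).card : ℝ) * Real.exp (-1) := by
        have : ∀ k ∈ Tᶜ, Real.exp (distEig G k) = Real.exp (-1) := by
          intro k hk; rw [hmemT' k (Finset.mem_compl.mp hk)]
        rw [Finset.sum_congr rfl this, Finset.sum_const, nsmul_eq_mul]
      have e3 : DEE G = ∑ k ∈ T, Real.exp (distEig G k) + ∑ k ∈ Tᶜ, Real.exp (distEig G k) := by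
        rw [Finset.sum_add_sum_compl T (fun k => Real.exp (distEig G k))]
        rfl
      rw [e3, e1, e2, hcc, hTcard]
      ring
    rw [hDEE]
    have hone : ((n:ℝ) - 1) * Real.exp (-1) < (n:ℝ) - 1 := by
      have he : Real.exp (-1) < 1 := Real.exp_lt_one_iff.mpr (by norm_num)
      nlinarith
    have htwo : Real.exp ((n:ℝ) - 1) ≤
        Real.exp (Real.sqrt ((n : ℝ) * ((n : ℝ) - 1) * (G.diam : ℝ) ^ 2 - 1)) := by
      apply Real.exp_le_exp.mpr
      have hsq : ((n:ℝ) - 1) ^ 2 ≤ (n : ℝ) * ((n : ℝ) - 1) * (G.diam : ℝ) ^ 2 - 1 := by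
        have hd2 : (1:ℝ) ≤ (G.diam : ℝ) ^ 2 := by nlinarith
        nlinarith
      calc (n:ℝ) - 1 = Real.sqrt (((n:ℝ) - 1) ^ 2) := by
            rw [Real.sqrt_sq (by linarith)]
        _ ≤ _ := Real.sqrt_le_sqrt hsq
    linarith
  · -- non-complete case
    push_neg at hcomp
    obtain ⟨a, b, hab, hnadj⟩ := hcomp
    -- an adjacent pair
    have hadj : ∃ u v : Fin n, G.Adj u v := by
      obtain ⟨x, y, hxy⟩ := exists_pair_ne (Fin n)
      obtain ⟨w⟩ := hconn x y
      cases w with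
      | nil => exact absurd rfl hxy
      | cons h p => exact ⟨_, _, h⟩
    obtain ⟨u, v, huv⟩ := hadj
    have huvne : u ≠ v := huv.ne
    have hduv : G.dist u v = 1 := SimpleGraph.dist_eq_one_iff_adj.mpr huv
    have hdvu : G.dist v u = 1 := by rw [SimpleGraph.dist_comm]; exact hduv
    -- diameter at least 2
    have hρ2 : 2 ≤ G.diam := by
      have h0 : 0 < G.dist a b := hconn.pos_dist_of_ne hab
      have h1 : G.dist a b ≠ 1 := fun h => hnadj (SimpleGraph.dist_eq_one_iff_adj.mp h)
      have := SimpleGraph.dist_le_diam (G := G) hE (u := a) (v := b)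
      omega
    have hρ2R : (2:ℝ) ≤ (G.diam : ℝ) := by exact_mod_cast hρ2
    set ρR : ℝ := (G.diam : ℝ) with hρRdef
    set S : ℝ := ∑ i, ∑ j, (G.dist i j : ℝ) ^ 2 with hSdef
    have hSprod : S = ∑ p : Fin n × Fin n, (G.dist p.1 p.2 : ℝ) ^ 2 := by
      rw [hSdef, ← Finset.sum_product']
      rfl
    have hf_nonneg : ∀ p : Fin n × Fin n, (0:ℝ) ≤ (G.dist p.1 p.2 : ℝ) ^ 2 := fun p => sq_nonneg _
    have hf_le : ∀ p : Fin n × Fin n,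
        (G.dist p.1 p.2 : ℝ) ^ 2 ≤ (if p.1 = p.2 then 0 else ρR ^ 2) := by
      intro p
      by_cases h : p.1 = p.2
      · simp [h, SimpleGraph.dist_self]
      · simp only [h, if_false]
        have hd : (G.dist p.1 p.2 : ℝ) ≤ ρR := by
          rw [hρRdef]
          exact_mod_cast SimpleGraph.dist_le_diam hE
        have : (0:ℝ) ≤ (G.dist p.1 p.2 : ℝ) := by positivity
        nlinarith
    have hgsum : ∑ p : Fin n × Fin n, (if p.1 = p.2 then (0:ℝ) else ρR ^ 2)
        = (n:ℝ) * ((n:ℝ) - 1) * ρR ^ 2 := by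
      have e1 : ∑ p : Fin n × Fin n, (if p.1 = p.2 then (0:ℝ) else ρR ^ 2)
          = ∑ i : Fin n, ∑ j : Fin n, (if i = j then (0:ℝ) else ρR ^ 2) := by
        rw [← Finset.sum_product']
        rfl
      have e2 : ∀ i : Fin n, ∑ j : Fin n, (if i = j then (0:ℝ) else ρR ^ 2)
          = ((n:ℝ) - 1) * ρR ^ 2 := by
        intro i
        have e3 : ∀ j : Fin n, (if i = j then (0:ℝ) else ρR ^ 2)
            = ρR ^ 2 - (if i = j then ρR ^ 2 else 0) := by
          intro j; by_cases h : i = j <;> simp [h]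
        rw [Finset.sum_congr rfl (fun j _ => e3 j), Finset.sum_sub_distrib,
          Finset.sum_const, Finset.sum_ite_eq]
        simp [Finset.card_univ]
        push_cast
        ring
      rw [e1, Finset.sum_congr rfl (fun i _ => e2 i), Finset.sum_const, Finset.card_univ]
      simp [Fintype.card_fin]
      push_cast
      ring
    have hpair_ne : ((u, v) : Fin n × Fin n) ≠ (v, u) := by
      intro h
      exact huvne (congrArg Prod.fst h)
    have hsub : ({(u, v), (v, u)} : Finset (Fin n × Fin n)) ⊆ Finset.univ := by
      intro p _; exact Finset.mem_univ p
    have hsaving : 2 * (ρR ^ 2 - 1) ≤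
        ∑ p : Fin n × Fin n, ((if p.1 = p.2 then (0:ℝ) else ρR ^ 2) - (G.dist p.1 p.2 : ℝ) ^ 2) := by
      have hpair : ∑ p ∈ ({(u, v), (v, u)} : Finset (Fin n × Fin n)),
          ((if p.1 = p.2 then (0:ℝ) else ρR ^ 2) - (G.dist p.1 p.2 : ℝ) ^ 2)
          = 2 * (ρR ^ 2 - 1) := by
        rw [Finset.sum_pair hpair_ne]
        simp [huvne, huvne.symm, hduv, hdvu]
        ring
      rw [← hpair]
      apply Finset.sum_le_sum_of_subset_of_nonneg hsub
      intro p _ _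
      linarith [hf_le p]
    have hSK : S ≤ (n:ℝ) * ((n:ℝ) - 1) * ρR ^ 2 - 1 := by
      have h1 : ∑ p : Fin n × Fin n,
          ((if p.1 = p.2 then (0:ℝ) else ρR ^ 2) - (G.dist p.1 p.2 : ℝ) ^ 2)
          = (n:ℝ) * ((n:ℝ) - 1) * ρR ^ 2 - S := by
        rw [Finset.sum_sub_distrib, hgsum, hSprod]
      rw [h1] at hsaving
      nlinarith
    have hS1 : (1:ℝ) ≤ S := by
      rw [hSprod]
      have hpair : ∑ p ∈ ({(u, v)} : Finset (Fin n × Fin n)), (G.dist p.1 p.2 : ℝ) ^ 2 = 1 := by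
        simp [hduv]
      rw [← hpair]
      apply Finset.sum_le_sum_of_subset_of_nonneg (fun p _ => Finset.mem_univ p)
      intro p _ _
      exact hf_nonneg p
    have hS0 : (0:ℝ) < S := by linarith
    set bS : ℝ := Real.sqrt S with hbSdef
    have hb : 0 < bS := Real.sqrt_pos.mpr hS0
    have hb2 : bS ^ 2 = S := Real.sq_sqrt hS0.le
    have hlam_sq : ∀ i, distEig G i ^ 2 ≤ S := by
      intro i
      have h := sum_sq_distEig G
      rw [← hSdef] at h
      rw [← h]
      exact Finset.single_le_sum (f := fun i => distEig G i ^ 2)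
        (fun j _ => sq_nonneg _) (Finset.mem_univ i)
    have habs : ∀ i, -bS ≤ distEig G i ∧ distEig G i ≤ bS := by
      intro i
      have h : |distEig G i| ≤ bS := by
        rw [← Real.sqrt_sq_eq_abs]
        exact Real.sqrt_le_sqrt (hlam_sq i)
      exact abs_le.mp h
    set c : ℝ := (Real.exp bS - 1 - bS) / bS ^ 2 with hcdef
    have hDEE : DEE G ≤ (n:ℝ) + c * S := by
      unfold DEE
      calc ∑ i, Real.exp (distEig G i)
          ≤ ∑ i, (1 + distEig G i + c * distEig G i ^ 2) :=
            Finset.sum_le_sum fun i _ =>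
              aux_exp_le_one_add_add hb (habs i).1 (habs i).2
        _ = (n:ℝ) + c * S := by
            rw [Finset.sum_add_distrib, Finset.sum_add_distrib, sum_distEig,
              Finset.sum_const, ← Finset.mul_sum, sum_sq_distEig, ← hSdef]
            simp [Finset.card_univ]
    have hcS : c * S = Real.exp bS - 1 - bS := by
      rw [hcdef, ← hb2]
      field_simp
    have hmono : Real.exp bS ≤
        Real.exp (Real.sqrt ((n : ℝ) * ((n : ℝ) - 1) * ρR ^ 2 - 1)) :=
      Real.exp_le_exp.mpr (Real.sqrt_le_sqrt hSK)
    calc DEE G ≤ (n:ℝ) + c * S := hDEE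
      _ = (n:ℝ) - 1 + Real.exp bS - bS := by rw [hcS]; ring
      _ < (n:ℝ) - 1 + Real.exp (Real.sqrt ((n : ℝ) * ((n : ℝ) - 1) * ρR ^ 2 - 1)) := by
        linarith
      _ = _ := by rw [hρRdef]

end DistanceEstrada
end

section
/- Let G be an r-regular simple graph on n vertices with diameter at most 2. Then DEE(G) = e^{2n-r-2} - e^{n-r-2} + e^{-1}·EE(G̅), where G̅ is the complement of G. -/
namespace DistanceEstrada

variable {n : ℕ}

open NormedSpace in
private lemma trace_exp' {A : Matrix (Fin n) (Fin n) ℝ} (hA : A.IsHermitian) :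
    (NormedSpace.exp A).trace = ∑ i, Real.exp (hA.eigenvalues i) := by
  set U : Matrix (Fin n) (Fin n) ℝ := (hA.eigenvectorUnitary : Matrix (Fin n) (Fin n) ℝ)
    with hUdef
  have hmem := hA.eigenvectorUnitary.2
  have h1 : U * star U = 1 := (Unitary.mem_iff.mp hmem).2
  have h2 : star U * U = 1 := (Unitary.mem_iff.mp hmem).1
  have hUinv : U⁻¹ = star U := Matrix.inv_eq_right_inv h1
  have hUnit : IsUnit U := ⟨⟨U, star U, h1, h2⟩, rfl⟩
  conv_lhs => rw [hA.spectral_theorem, Unitary.conjStarAlgAut_apply, ← hUinv]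
  rw [Matrix.exp_conj U _ hUnit, Matrix.trace_mul_cycle, hUinv, h2, one_mul,
    Matrix.exp_diagonal, Matrix.trace_diagonal]
  refine Finset.sum_congr rfl fun i _ => ?_
  rw [Pi.exp_def]
  simp [Real.exp_eq_exp_ℝ, RCLike.ofReal_real_eq_id]

open NormedSpace in
private lemma exp_mul_of_mul_eq_smul {X Y : Matrix (Fin n) (Fin n) ℝ} {c : ℝ}
    (h : X * Y = c • Y) : NormedSpace.exp X * Y = Real.exp c • Y := by
  letI : SeminormedRing (Matrix (Fin n) (Fin n) ℝ) := Matrix.linftyOpSemiNormedRing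
  letI : NormedRing (Matrix (Fin n) (Fin n) ℝ) := Matrix.linftyOpNormedRing
  letI : NormedAlgebra ℝ (Matrix (Fin n) (Fin n) ℝ) := Matrix.linftyOpNormedAlgebra
  have hpow : ∀ k : ℕ, X ^ k * Y = c ^ k • Y := by
    intro k
    induction k with
    | zero => simp
    | succ k ih =>
      rw [pow_succ, mul_assoc, h, mul_smul_comm, ih, smul_smul, pow_succ, mul_comm]
  calc NormedSpace.exp X * Y
      = (∑' k : ℕ, (((k.factorial : ℕ) : ℝ)⁻¹ • X ^ k)) * Y := by
        rw [exp_eq_tsum ℝ]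
    _ = ∑' k : ℕ, (((k.factorial : ℕ) : ℝ)⁻¹ • X ^ k) * Y :=
        ((expSeries_summable' (𝕂 := ℝ) X).tsum_mul_right Y).symm
    _ = ∑' k : ℕ, (((k.factorial : ℕ) : ℝ)⁻¹ * c ^ k) • Y := by
        refine tsum_congr fun k => ?_
        rw [smul_mul_assoc, hpow, smul_smul]
    _ = (∑' k : ℕ, (((k.factorial : ℕ) : ℝ)⁻¹ * c ^ k)) • Y := by
        refine Summable.tsum_smul_const ?_ Y
        simpa [smul_eq_mul] using expSeries_summable' (𝕂 := ℝ) c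
    _ = Real.exp c • Y := by
        rw [Real.exp_eq_exp_ℝ, exp_eq_tsum ℝ]
        simp [smul_eq_mul]

open NormedSpace in
private lemma exp_smul_one (c : ℝ) :
    NormedSpace.exp (c • (1 : Matrix (Fin n) (Fin n) ℝ)) = Real.exp c • 1 := by
  have h : (c • (1 : Matrix (Fin n) (Fin n) ℝ)) * 1 = c • 1 := by rw [mul_one]
  simpa using exp_mul_of_mul_eq_smul h

open NormedSpace in
private lemma exp_of_sq {X : Matrix (Fin n) (Fin n) ℝ} {c : ℝ} (hc : c ≠ 0)
    (h : X * X = c • X) :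
    NormedSpace.exp X = 1 + ((Real.exp c - 1) / c) • X := by
  letI : SeminormedRing (Matrix (Fin n) (Fin n) ℝ) := Matrix.linftyOpSemiNormedRing
  letI : NormedRing (Matrix (Fin n) (Fin n) ℝ) := Matrix.linftyOpNormedRing
  letI : NormedAlgebra ℝ (Matrix (Fin n) (Fin n) ℝ) := Matrix.linftyOpNormedAlgebra
  have hpow : ∀ k : ℕ, X ^ (k + 1) = c ^ k • X := by
    intro k
    induction k with
    | zero => simp
    | succ k ih =>
      rw [pow_succ, ih, smul_mul_assoc, h, smul_smul, pow_succ]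
  have hsum : Summable fun k : ℕ => (((k.factorial : ℕ) : ℝ)⁻¹ • X ^ k) :=
    expSeries_summable' (𝕂 := ℝ) X
  have hS : Summable fun k : ℕ => ((((k+1).factorial : ℕ) : ℝ)⁻¹ * c ^ k) := by
    have := (summable_nat_add_iff
      (f := fun k : ℕ => (((k.factorial : ℕ) : ℝ)⁻¹ * c ^ k)) 1).mpr
      (by simpa [smul_eq_mul] using expSeries_summable' (𝕂 := ℝ) c)
    have h2 : Summable fun k : ℕ => ((((k+1).factorial : ℕ) : ℝ)⁻¹ * c ^ (k + 1)) := by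
      simpa using this
    have := h2.mul_right c⁻¹
    refine this.congr fun k => ?_
    field_simp [pow_succ]
    ring
  have hSval : (∑' k : ℕ, ((((k+1).factorial : ℕ) : ℝ)⁻¹ * c ^ k)) = (Real.exp c - 1) / c := by
    have hec : Real.exp c = ∑' k : ℕ, (((k.factorial : ℕ) : ℝ)⁻¹ * c ^ k) := by
      rw [Real.exp_eq_exp_ℝ, exp_eq_tsum ℝ]; simp [smul_eq_mul]
    have hsplit := Summable.tsum_eq_zero_add
      (f := fun k : ℕ => (((k.factorial : ℕ) : ℝ)⁻¹ * c ^ k))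
      (by simpa [smul_eq_mul] using expSeries_summable' (𝕂 := ℝ) c)
    rw [eq_div_iff hc]
    have : (∑' k : ℕ, ((((k+1).factorial : ℕ) : ℝ)⁻¹ * c ^ k)) * c
        = ∑' k : ℕ, ((((k+1).factorial : ℕ) : ℝ)⁻¹ * c ^ (k + 1)) := by
      rw [← tsum_mul_right]
      refine tsum_congr fun k => by ring
    rw [this, hec, hsplit]
    simp [Nat.factorial]
  have htail : (∑' k : ℕ, ((((k+1).factorial : ℕ) : ℝ)⁻¹ • X ^ (k + 1)))
      = (∑' k : ℕ, ((((k+1).factorial : ℕ) : ℝ)⁻¹ * c ^ k)) • X := by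
    rw [← Summable.tsum_smul_const hS X]
    refine tsum_congr fun k => ?_
    rw [hpow, smul_smul]
  rw [exp_eq_tsum ℝ]
  beta_reduce
  rw [Summable.tsum_eq_zero_add hsum]
  rw [htail, hSval]
  simp [Nat.factorial]

/-- **Theorem 6 (Shang).** If `G` is an `r`-regular graph on `n` vertices with diameter at most 2,
then `DEE(G) = e^{2n-r-2} - e^{n-r-2} + e⁻¹ EE(G̅)`. -/
theorem distance_estrada_of_regular_diam_two {n : ℕ} (G : SimpleGraph (Fin n))
    [DecidableRel G.Adj] (r : ℕ) (hreg : G.IsRegularOfDegree r)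
    (hconn : G.Connected) (hdiam : G.diam ≤ 2) :
    DEE G = Real.exp (2 * (n : ℝ) - r - 2) - Real.exp ((n : ℝ) - r - 2) +
      Real.exp (-1) * EE Gᶜ := by
  classical
  have hne : Nonempty (Fin n) := hconn.nonempty
  haveI := hne
  have hn : 0 < n := by
    have := Fintype.card_pos (α := Fin n)
    simpa using this
  have hr : r < n := by
    obtain ⟨i⟩ := hne
    have := G.degree_lt_card_verts i
    rwa [hreg i, Fintype.card_fin] at this
  set J : Matrix (Fin n) (Fin n) ℝ := Matrix.of (fun _ _ => (1 : ℝ)) with hJdef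
  set B : Matrix (Fin n) (Fin n) ℝ := adjMat Gᶜ with hBdef
  set c : ℝ := (n : ℝ) - 1 - r with hcdef
  have hnR : ((n : ℝ)) ≠ 0 := Nat.cast_ne_zero.mpr hn.ne'
  have hcompl : Gᶜ.IsRegularOfDegree (n - 1 - r) := by
    have := hreg.compl
    rwa [Fintype.card_fin] at this
  have hdegc : ∀ i : Fin n, ((Gᶜ.degree i : ℕ) : ℝ) = c := by
    intro i
    rw [hcompl i, hcdef]
    rw [Nat.cast_sub (by omega : r ≤ n - 1), Nat.cast_sub (by omega : 1 ≤ n)]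
    push_cast
    ring
  have hBite : ∀ i j, B i j = if Gᶜ.Adj i j then (1:ℝ) else 0 := by
    intro i j
    by_cases h : Gᶜ.Adj i j <;> simp [hBdef, adjMat, h]
  have hrow : ∀ i, (∑ j, B i j) = c := by
    intro i
    have h1 : (∑ j, B i j) = ∑ j, (if Gᶜ.Adj i j then (1:ℝ) else 0) :=
      Finset.sum_congr rfl fun j _ => hBite i j
    rw [h1, Finset.sum_boole, ← hdegc i]
    congr 1
    rw [SimpleGraph.degree, SimpleGraph.neighborFinset_eq_filter]
  have hsym : ∀ i j, B i j = B j i := by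
    intro i j
    rw [hBite, hBite]
    simp [SimpleGraph.adj_comm]
  have hcol : ∀ j, (∑ i, B i j) = c := by
    intro j
    rw [← hrow j]
    exact Finset.sum_congr rfl fun i _ => (hsym i j) ▸ rfl
  have hBJ : B * J = c • J := by
    ext i j
    simp only [Matrix.mul_apply, Matrix.smul_apply, hJdef, Matrix.of_apply, mul_one,
      smul_eq_mul]
    rw [hrow i]
  have hJB : J * B = c • J := by
    ext i j
    simp only [Matrix.mul_apply, Matrix.smul_apply, hJdef, Matrix.of_apply, one_mul,
      smul_eq_mul]
    rw [hcol j]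
    ring
  have hJJ : J * J = (n : ℝ) • J := by
    ext i j
    simp only [Matrix.mul_apply, Matrix.smul_apply, hJdef, Matrix.of_apply, mul_one,
      smul_eq_mul, Finset.sum_const, Finset.card_univ, Fintype.card_fin, nsmul_eq_mul,
      mul_one]
  have hediam : G.ediam ≠ ⊤ := by
    obtain ⟨u, v, huv⟩ := G.exists_edist_eq_ediam_of_finite
    rw [← huv]
    exact SimpleGraph.edist_ne_top_iff_reachable.mpr (hconn.preconnected u v)
  have hD : distMatrix G = (B - 1) + J := by
    ext i j
    simp only [distMatrix, Matrix.add_apply, Matrix.sub_apply, hJdef, Matrix.of_apply]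
    rcases eq_or_ne i j with rfl | hij
    · rw [hBite]
      simp [SimpleGraph.dist_self, Matrix.one_apply_eq]
    · rw [hBite, Matrix.one_apply_ne hij]
      by_cases hadj : G.Adj i j
      · have h1 : G.dist i j = 1 := SimpleGraph.dist_eq_one_iff_adj.mpr hadj
        have h2 : ¬ Gᶜ.Adj i j := by simp [SimpleGraph.compl_adj, hadj]
        simp [h1, h2]
      · have hGc : Gᶜ.Adj i j := (SimpleGraph.compl_adj G i j).mpr ⟨hij, hadj⟩
        have hle : G.dist i j ≤ 2 := le_trans (G.dist_le_diam hediam) hdiam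
        have hne1 : G.dist i j ≠ 1 := fun h => hadj (SimpleGraph.dist_eq_one_iff_adj.mp h)
        have hpos : 0 < G.dist i j := hconn.pos_dist_of_ne hij
        have h2 : G.dist i j = 2 := by omega
        simp [h2, hGc]
        norm_num
  have hcommBJ : Commute (B - 1) J := by
    show (B - 1) * J = J * (B - 1)
    rw [sub_mul, one_mul, mul_sub, mul_one, hBJ, hJB]
  have hcommB1 : Commute B ((-1 : ℝ) • (1 : Matrix (Fin n) (Fin n) ℝ)) :=
    (Commute.one_right B).smul_right _
  have hB1 : B - 1 = B + (-1 : ℝ) • (1 : Matrix (Fin n) (Fin n) ℝ) := by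
    rw [neg_one_smul, sub_eq_add_neg]
  have hexpB1 : NormedSpace.exp (B - 1) = Real.exp (-1) • NormedSpace.exp B := by
    rw [hB1, Matrix.exp_add_of_commute _ _ hcommB1, exp_smul_one, mul_smul_comm, mul_one]
  have hexpD : NormedSpace.exp (distMatrix G)
      = Real.exp (-1) • (NormedSpace.exp B * NormedSpace.exp J) := by
    rw [hD, Matrix.exp_add_of_commute _ _ hcommBJ, hexpB1, smul_mul_assoc]
  have hexpJ : NormedSpace.exp J = 1 + ((Real.exp n - 1) / n) • J := exp_of_sq hnR hJJ
  have hexpBJ : NormedSpace.exp B * J = Real.exp c • J := exp_mul_of_mul_eq_smul hBJ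
  have htrJ : J.trace = (n : ℝ) := by
    simp [Matrix.trace, Matrix.diag, hJdef]
  have hDEE : DEE G = (NormedSpace.exp (distMatrix G)).trace :=
    (trace_exp' (distMatrix_isHermitian G)).symm
  have hEE : EE Gᶜ = (NormedSpace.exp B).trace :=
    (trace_exp' (adjMat_isHermitian Gᶜ)).symm
  rw [hDEE, hexpD, hexpJ, mul_add, mul_one, Matrix.mul_smul, hexpBJ,
    Matrix.trace_smul, Matrix.trace_add, Matrix.trace_smul, Matrix.trace_smul, htrJ, ← hEE]
  simp only [smul_eq_mul]
  have h1 : Real.exp (-1) * (Real.exp ((n:ℝ)) * Real.exp c)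
      = Real.exp (2 * (n:ℝ) - r - 2) := by
    rw [← Real.exp_add, ← Real.exp_add]
    congr 1
    rw [hcdef]; ring
  have h2 : Real.exp (-1) * Real.exp c = Real.exp ((n:ℝ) - r - 2) := by
    rw [← Real.exp_add]
    congr 1
    rw [hcdef]; ring
  calc Real.exp (-1) * (EE Gᶜ + (Real.exp n - 1) / n * (Real.exp c * n))
      = Real.exp (-1) * (Real.exp ((n:ℝ)) * Real.exp c)
        - Real.exp (-1) * Real.exp c + Real.exp (-1) * EE Gᶜ := by
        field_simp
        ring
    _ = Real.exp (2 * (n:ℝ) - r - 2) - Real.exp ((n:ℝ) - r - 2)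
        + Real.exp (-1) * EE Gᶜ := by rw [h1, h2]


end DistanceEstrada
end

section
/- Let G be a connected simple graph with n vertices, m edges, and diameter ρ. Then √(n² + 4m) ≤ DEE(G) ≤ n - 1 + e^{ρ√(n(n-1))}, and equality holds in either inequality if and only if G is the single-vertex graph K₁. -/
set_option maxHeartbeats 1000000

namespace DistanceEstrada

variable {n : ℕ}

/-! ### Auxiliary analytic lemmas -/

section Aux

open Real Finset

private lemma aux_sign2 {f f' : ℝ → ℝ} (hf : ∀ x, HasDerivAt f (f' x) x) (h0 : f 0 = 0)
    (hpos : ∀ x : ℝ, x ≠ 0 → 0 < f' x) :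
    (∀ x : ℝ, 0 < x → 0 < f x) ∧ (∀ x : ℝ, x < 0 → f x < 0) := by
  have hdiff : Differentiable ℝ f := fun x => (hf x).differentiableAt
  have hmono : StrictMonoOn f (Set.Ici 0) := by
    apply strictMonoOn_of_deriv_pos (convex_Ici 0) hdiff.continuous.continuousOn
    intro x hx
    rw [interior_Ici] at hx
    rw [(hf x).deriv]
    exact hpos x (ne_of_gt hx)
  have hmono2 : StrictMonoOn f (Set.Iic 0) := by
    apply strictMonoOn_of_deriv_pos (convex_Iic 0) hdiff.continuous.continuousOn
    intro x hx
    rw [interior_Iic] at hx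
    rw [(hf x).deriv]
    exact hpos x (ne_of_lt hx)
  constructor
  · intro x hx
    have := hmono (Set.mem_Ici.mpr le_rfl) (Set.mem_Ici.mpr hx.le) hx
    rwa [h0] at this
  · intro x hx
    have := hmono2 (Set.mem_Iic.mpr hx.le) (Set.mem_Iic.mpr le_rfl) hx
    rwa [h0] at this

private lemma aux_sign {f f' : ℝ → ℝ} (hf : ∀ x, HasDerivAt f (f' x) x) (h0 : f 0 = 0)
    (hpos : ∀ x : ℝ, 0 < x → 0 < f' x) (hneg : ∀ x : ℝ, x < 0 → f' x < 0) :
    ∀ x : ℝ, x ≠ 0 → 0 < f x := by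
  have hdiff : Differentiable ℝ f := fun x => (hf x).differentiableAt
  have hmono : StrictMonoOn f (Set.Ici 0) := by
    apply strictMonoOn_of_deriv_pos (convex_Ici 0) hdiff.continuous.continuousOn
    intro x hx
    rw [interior_Ici] at hx
    rw [(hf x).deriv]
    exact hpos x hx
  have hanti : StrictAntiOn f (Set.Iic 0) := by
    apply strictAntiOn_of_deriv_neg (convex_Iic 0) hdiff.continuous.continuousOn
    intro x hx
    rw [interior_Iic] at hx
    rw [(hf x).deriv]
    exact hneg x hx
  intro x hx
  rcases hx.lt_or_gt with h | h
  · have := hanti (Set.mem_Iic.mpr h.le) (Set.mem_Iic.mpr le_rfl) h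
    rwa [h0] at this
  · have := hmono (Set.mem_Ici.mpr le_rfl) (Set.mem_Ici.mpr h.le) h
    rwa [h0] at this

private lemma aux_nonneg {f f' : ℝ → ℝ} (hf : ∀ x, HasDerivAt f (f' x) x) (h0 : f 0 = 0)
    (hpos : ∀ x : ℝ, 0 ≤ x → 0 ≤ f' x) : ∀ x : ℝ, 0 ≤ x → 0 ≤ f x := by
  have hdiff : Differentiable ℝ f := fun x => (hf x).differentiableAt
  intro x hx
  have hmono : MonotoneOn f (Set.Ici 0) := by
    apply monotoneOn_of_deriv_nonneg (convex_Ici 0) hdiff.continuous.continuousOn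
      (fun y _ => (hdiff y).differentiableWithinAt)
    intro y hy
    rw [interior_Ici] at hy
    rw [(hf y).deriv]
    exact hpos y hy.le
  have := hmono (Set.mem_Ici.mpr le_rfl) (Set.mem_Ici.mpr hx) hx
  rwa [h0] at this

private lemma exp_two_deriv (x : ℝ) :
    HasDerivAt (fun y : ℝ => Real.exp (2*y)) (Real.exp (2*x) * 2) x := by
  have h2 : HasDerivAt (fun y : ℝ => 2*y) 2 x := by
    simpa using (hasDerivAt_id x).const_mul (2:ℝ)
  exact (Real.hasDerivAt_exp (2*x)).comp x h2

private lemma pfun_deriv (x : ℝ) :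
    HasDerivAt (fun y : ℝ => Real.exp (2*y) - (1 + 2*y + 2*y^2))
      (2 * (Real.exp (2*x) - (1 + 2*x))) x := by
  have hpoly : HasDerivAt (fun y : ℝ => 1 + 2*y + 2*y^2) (2 + 4*x) x := by
    have h1 : HasDerivAt (fun y : ℝ => 2*y) 2 x := by
      simpa using (hasDerivAt_id x).const_mul (2:ℝ)
    have h2 : HasDerivAt (fun y : ℝ => 2*y^2) (2*(2*x)) x := by
      simpa using (hasDerivAt_pow 2 x).const_mul (2:ℝ)
    have := (h1.const_add 1).add h2
    exact this.congr_deriv (by ring)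
  have := (exp_two_deriv x).sub hpoly
  exact this.congr_deriv (by ring)

private lemma pfun_sign :
    (∀ x : ℝ, 0 < x → 0 < Real.exp (2*x) - (1 + 2*x + 2*x^2)) ∧
    (∀ x : ℝ, x < 0 → Real.exp (2*x) - (1 + 2*x + 2*x^2) < 0) := by
  apply aux_sign2 pfun_deriv (by norm_num)
  intro x hx
  have := Real.add_one_lt_exp (x := 2*x) (by simpa using hx)
  nlinarith

private lemma gfun_deriv (x : ℝ) :
    HasDerivAt (fun y : ℝ => Real.exp (2*y) - (1 + 2*y + 2*y^2 + (4/3)*y^3))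
      (2 * (Real.exp (2*x) - (1 + 2*x + 2*x^2))) x := by
  have hpoly : HasDerivAt (fun y : ℝ => 1 + 2*y + 2*y^2 + (4/3)*y^3)
      (2 + 4*x + 4*x^2) x := by
    have h1 : HasDerivAt (fun y : ℝ => 2*y) 2 x := by
      simpa using (hasDerivAt_id x).const_mul (2:ℝ)
    have h2 : HasDerivAt (fun y : ℝ => 2*y^2) (2*(2*x)) x := by
      simpa using (hasDerivAt_pow 2 x).const_mul (2:ℝ)
    have h3 : HasDerivAt (fun y : ℝ => (4/3)*y^3) ((4/3)*(3*x^2)) x := by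
      simpa using (hasDerivAt_pow 3 x).const_mul ((4:ℝ)/3)
    have := ((h1.const_add 1).add h2).add h3
    exact this.congr_deriv (by ring)
  have := (exp_two_deriv x).sub hpoly
  exact this.congr_deriv (by ring)

private lemma cubic_lt_exp {x : ℝ} (hx : x ≠ 0) :
    1 + 2*x + 2*x^2 + (4/3)*x^3 < Real.exp (2*x) := by
  have h := aux_sign gfun_deriv (by norm_num)
    (fun x hx => by nlinarith [pfun_sign.1 x hx])
    (fun x hx => by nlinarith [pfun_sign.2 x hx]) x hx
  linarith

private lemma cubic_le_exp (x : ℝ) :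
    1 + 2*x + 2*x^2 + (4/3)*x^3 ≤ Real.exp (2*x) := by
  rcases eq_or_ne x 0 with rfl | hx
  · norm_num
  · exact (cubic_lt_exp hx).le

private lemma phi_abs (x : ℝ) : Real.exp x - 1 - x ≤ Real.exp |x| - 1 - |x| := by
  rcases abs_cases x with ⟨h, _⟩ | ⟨h, hneg⟩
  · rw [h]
  · rw [h]
    have hs : ∀ t : ℝ, 0 ≤ t → 0 ≤ Real.exp t - Real.exp (-t) - 2*t := by
      apply aux_nonneg (f' := fun t => Real.exp t - Real.exp (-t) * (-1) - 2)
      · intro t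
        exact ((Real.hasDerivAt_exp t).sub
          ((Real.hasDerivAt_exp (-t)).comp t (hasDerivAt_neg t))).sub
          (by simpa using (hasDerivAt_id t).const_mul (2:ℝ))
      · simp
      · intro t _
        have h1 := Real.add_one_le_exp t
        have h2 := Real.add_one_le_exp (-t)
        linarith
    have := hs (-x) (by linarith)
    simp only [neg_neg] at this
    linarith

private lemma exp_sub_eq_tsum (t : ℝ) :
    Real.exp t - 1 - t = ∑' k : ℕ, t^(k+2)/(Nat.factorial (k+2) : ℝ) := by
  have hs := Real.summable_pow_div_factorial t
  have h := Summable.sum_add_tsum_nat_add (f := fun k : ℕ => t ^ k / (Nat.factorial k : ℝ)) 2 hs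
  have hexp : Real.exp t = ∑' k : ℕ, t ^ k / (Nat.factorial k : ℝ) := by
    rw [Real.exp_eq_exp_ℝ, NormedSpace.exp_eq_tsum_div]
  rw [hexp, ← h]
  simp [Finset.sum_range_succ, Nat.factorial]
  ring

private lemma sum_phi_le {N : ℕ} (a : Fin N → ℝ) (ha : ∀ i, 0 ≤ a i) :
    ∑ i, (Real.exp (a i) - 1 - a i) ≤
      Real.exp (Real.sqrt (∑ i, (a i)^2)) - 1 - Real.sqrt (∑ i, (a i)^2) := by
  set T : ℝ := Real.sqrt (∑ i, (a i)^2) with hT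
  have hT0 : 0 ≤ T := Real.sqrt_nonneg _
  have hTsq : T^2 = ∑ i, (a i)^2 :=
    Real.sq_sqrt (Finset.sum_nonneg fun i _ => sq_nonneg _)
  have hai : ∀ i, a i ≤ T := by
    intro i
    have h1 : (a i)^2 ≤ ∑ j, (a j)^2 :=
      Finset.single_le_sum (fun j _ => sq_nonneg (a j)) (Finset.mem_univ i)
    calc a i = Real.sqrt ((a i)^2) := (Real.sqrt_sq (ha i)).symm
    _ ≤ T := Real.sqrt_le_sqrt h1
  have hsumm : ∀ i : Fin N, Summable (fun k : ℕ => (a i)^(k+2)/(Nat.factorial (k+2) : ℝ)) :=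
    fun i => (summable_nat_add_iff 2).mpr (Real.summable_pow_div_factorial (a i))
  have hsummT : Summable (fun k : ℕ => T^(k+2)/(Nat.factorial (k+2) : ℝ)) :=
    (summable_nat_add_iff 2).mpr (Real.summable_pow_div_factorial T)
  calc ∑ i, (Real.exp (a i) - 1 - a i)
      = ∑ i, ∑' k : ℕ, (a i)^(k+2)/(Nat.factorial (k+2) : ℝ) := by
        exact Finset.sum_congr rfl fun i _ => exp_sub_eq_tsum (a i)
    _ = ∑' k : ℕ, ∑ i, (a i)^(k+2)/(Nat.factorial (k+2) : ℝ) := by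
        exact (Summable.tsum_finsetSum fun i _ => hsumm i).symm
    _ ≤ ∑' k : ℕ, T^(k+2)/(Nat.factorial (k+2) : ℝ) := by
        apply Summable.tsum_le_tsum _ (summable_sum fun i _ => hsumm i) hsummT
        intro k
        rw [← Finset.sum_div]
        have hfac : (0:ℝ) < (Nat.factorial (k+2) : ℝ) := by positivity
        gcongr
        have h1 : ∀ i : Fin N, (a i)^(k+2) ≤ (a i)^2 * T^k := by
          intro i
          have : (a i)^(k+2) = (a i)^2 * (a i)^k := by ring
          rw [this]
          exact mul_le_mul_of_nonneg_left (pow_le_pow_left₀ (ha i) (hai i) k) (sq_nonneg _)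
        calc ∑ i, (a i)^(k+2) ≤ ∑ i, (a i)^2 * T^k := Finset.sum_le_sum fun i _ => h1 i
          _ = (∑ i, (a i)^2) * T^k := by rw [← Finset.sum_mul]
          _ = T^2 * T^k := by rw [hTsq]
          _ = T^(k+2) := by ring
    _ = Real.exp T - 1 - T := (exp_sub_eq_tsum T).symm

private lemma trace_pow_eq {N : ℕ} {A : Matrix (Fin N) (Fin N) ℝ} (hA : A.IsHermitian) (k : ℕ) :
    (A ^ k).trace = ∑ i, hA.eigenvalues i ^ k := by
  set U : Matrix (Fin N) (Fin N) ℝ := (hA.eigenvectorUnitary : Matrix (Fin N) (Fin N) ℝ) with hU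
  have hU1 : U * star U = 1 := (Matrix.mem_unitaryGroup_iff).mp hA.eigenvectorUnitary.2
  have hU2 : star U * U = 1 := (Matrix.mem_unitaryGroup_iff').mp hA.eigenvectorUnitary.2
  set D : Matrix (Fin N) (Fin N) ℝ := Matrix.diagonal (RCLike.ofReal ∘ hA.eigenvalues) with hD
  have hs : A = U * D * star U := hA.spectral_theorem
  have hpow : A ^ k = U * D ^ k * star U := by
    induction k with
    | zero => simpa using hU1.symm
    | succ k ih =>
      rw [pow_succ, ih, pow_succ]
      conv_lhs => rw [hs]
      simp only [Matrix.mul_assoc]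
      rw [← Matrix.mul_assoc (star U) U, hU2, Matrix.one_mul]
  rw [hpow, Matrix.trace_mul_cycle, hU2, Matrix.one_mul, hD,
    Matrix.diagonal_pow, Matrix.trace_diagonal]
  simp

end Aux

open Finset

/-- **Theorem 1 (Gutman et al.).** For a connected graph `G` with `n` vertices, `m` edges and
diameter `ρ`, `√(n² + 4m) ≤ DEE(G) ≤ n - 1 + e^{ρ √(n(n-1))}`, with equality on either side
iff `G = K₁`, i.e. `n = 1`. -/
theorem distance_estrada_basic_bounds {n m : ℕ} (G : SimpleGraph (Fin n))
    [DecidableRel G.Adj] (hconn : G.Connected) (hm : G.edgeFinset.card = m) :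
    (Real.sqrt ((n : ℝ) ^ 2 + 4 * m) ≤ DEE G ∧
      DEE G ≤ (n : ℝ) - 1 + Real.exp ((G.diam : ℝ) * Real.sqrt ((n : ℝ) * ((n : ℝ) - 1)))) ∧
    (Real.sqrt ((n : ℝ) ^ 2 + 4 * m) = DEE G ↔ n = 1) ∧
    (DEE G = (n : ℝ) - 1 + Real.exp ((G.diam : ℝ) * Real.sqrt ((n : ℝ) * ((n : ℝ) - 1))) ↔
      n = 1) := by
  classical
  have hne : Nonempty (Fin n) := hconn.nonempty
  have hn0 : 0 < n := Fin.pos_iff_nonempty.mpr hne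
  set lam : Fin n → ℝ := distEig G with hlam
  set Dm : Matrix (Fin n) (Fin n) ℝ := distMatrix G with hDm
  have hherm : Dm.IsHermitian := distMatrix_isHermitian G
  have htr : ∀ k, (Dm ^ k).trace = ∑ i, lam i ^ k := fun k => trace_pow_eq hherm k
  have hDentry : ∀ i j, Dm i j = (G.dist i j : ℝ) := fun i j => rfl
  have hDnn : ∀ i j, (0:ℝ) ≤ Dm i j := fun i j => Nat.cast_nonneg _
  -- trace facts
  have h0 : ∑ i, lam i = 0 := by
    have h := htr 1
    simp only [pow_one] at h
    rw [← h, Matrix.trace]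
    apply Finset.sum_eq_zero
    intro i _
    simp [Matrix.diag, hDm, distMatrix]
  have h2 : ∑ i, lam i ^ 2 = ∑ i, ∑ j, (G.dist i j : ℝ)^2 := by
    have h := htr 2
    rw [← h, Matrix.trace, pow_two]
    apply Finset.sum_congr rfl
    intro i _
    rw [Matrix.diag_apply, Matrix.mul_apply]
    apply Finset.sum_congr rfl
    intro j _
    rw [hDentry, hDentry]
    have hcomm : G.dist j i = G.dist i j := by rw [SimpleGraph.dist_comm]
    rw [hcomm]
    ring
  have h3nn : (0:ℝ) ≤ ∑ i, lam i ^ 3 := by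
    rw [← htr 3]
    have h3 : Dm ^ 3 = Dm ^ 2 * Dm := by rw [pow_succ]
    rw [Matrix.trace, h3]
    apply Finset.sum_nonneg
    intro i _
    rw [Matrix.diag_apply, Matrix.mul_apply]
    apply Finset.sum_nonneg
    intro j _
    apply mul_nonneg _ (hDnn j i)
    rw [pow_two, Matrix.mul_apply]
    exact Finset.sum_nonneg fun k _ => mul_nonneg (hDnn i k) (hDnn k j)
  -- distance sums vs edges
  have h2m : 2*(m:ℝ) ≤ ∑ i, ∑ j, (G.dist i j:ℝ)^2 := by
    have hadj : ∀ i j : Fin n, (if G.Adj i j then (1:ℝ) else 0) ≤ (G.dist i j : ℝ)^2 := by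
      intro i j
      split_ifs with h
      · have h1 : 1 ≤ G.dist i j := hconn.pos_dist_of_ne (G.ne_of_adj h)
        have h1' : (1:ℝ) ≤ (G.dist i j : ℝ) := by exact_mod_cast h1
        nlinarith
      · positivity
    have hdeg : ∀ i, ∑ j, (if G.Adj i j then (1:ℝ) else 0) = (G.degree i : ℝ) := by
      intro i
      rw [Finset.sum_boole]
      congr 1
      rw [SimpleGraph.degree, SimpleGraph.neighborFinset_eq_filter]
    have hsum : ∑ i, ∑ j, (if G.Adj i j then (1:ℝ) else 0) = 2*(m:ℝ) := by
      have h := SimpleGraph.sum_degrees_eq_twice_card_edges G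
      rw [hm] at h
      calc ∑ i, ∑ j, (if G.Adj i j then (1:ℝ) else 0) = ∑ i, (G.degree i : ℝ) :=
            Finset.sum_congr rfl fun i _ => hdeg i
        _ = ((∑ i, G.degree i : ℕ) : ℝ) := by push_cast; ring
        _ = ((2*m : ℕ) : ℝ) := by rw [h]
        _ = 2*(m:ℝ) := by push_cast; ring
    rw [← hsum]
    exact Finset.sum_le_sum fun i _ => Finset.sum_le_sum fun j _ => hadj i j
  -- diameter bound
  have hed : G.ediam ≠ ⊤ := by
    obtain ⟨u, v, huv⟩ := G.exists_edist_eq_ediam_of_finite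
    rw [← huv]
    exact (SimpleGraph.edist_ne_top_iff_reachable).mpr (hconn.preconnected u v)
  have hρ : ∀ i j : Fin n, (G.dist i j : ℝ) ≤ (G.diam : ℝ) := by
    intro i j
    exact_mod_cast SimpleGraph.dist_le_diam hed
  have hd2sum : ∑ i, ∑ j, (G.dist i j:ℝ)^2 ≤ (n:ℝ)*((n:ℝ)-1) * (G.diam:ℝ)^2 := by
    have hpoint : ∀ i j : Fin n, (G.dist i j:ℝ)^2 ≤
        (if i = j then 0 else (G.diam:ℝ)^2) := by
      intro i j
      split_ifs with h
      · subst h; simp [SimpleGraph.dist_self]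
      · have := hρ i j
        have hnn : (0:ℝ) ≤ (G.dist i j : ℝ) := Nat.cast_nonneg _
        nlinarith
    have hval : ∑ i : Fin n, ∑ j : Fin n, (if i = j then (0:ℝ) else (G.diam:ℝ)^2)
        = (n:ℝ)*((n:ℝ)-1) * (G.diam:ℝ)^2 := by
      have hinner : ∀ i : Fin n, ∑ j : Fin n, (if i = j then (0:ℝ) else (G.diam:ℝ)^2)
          = (n:ℝ)*(G.diam:ℝ)^2 - (G.diam:ℝ)^2 := by
        intro i
        have : ∀ j : Fin n, (if i = j then (0:ℝ) else (G.diam:ℝ)^2)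
            = (G.diam:ℝ)^2 - (if i = j then (G.diam:ℝ)^2 else 0) := by
          intro j; split_ifs <;> ring
        rw [Finset.sum_congr rfl fun j _ => this j, Finset.sum_sub_distrib,
          Finset.sum_const, Finset.sum_ite_eq, Finset.card_univ, Fintype.card_fin]
        simp [nsmul_eq_mul]
      rw [Finset.sum_congr rfl fun i _ => hinner i, Finset.sum_const, Finset.card_univ,
        Fintype.card_fin, nsmul_eq_mul]
      ring
    rw [← hval]
    exact Finset.sum_le_sum fun i _ => Finset.sum_le_sum fun j _ => hpoint i j
  -- abbreviations
  set S2 : ℝ := ∑ i, lam i ^ 2 with hS2def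
  set S3 : ℝ := ∑ i, lam i ^ 3 with hS3def
  set R : ℝ := (G.diam : ℝ) * Real.sqrt ((n:ℝ)*((n:ℝ)-1)) with hRdef
  have hDEE : DEE G = ∑ i, Real.exp (lam i) := rfl
  have hDEEpos : 0 < DEE G := by
    rw [hDEE]
    exact Finset.sum_pos (fun i _ => Real.exp_pos _) Finset.univ_nonempty
  -- lower bound machinery
  have hprod : DEE G ^ 2 = ∑ i, ∑ j, Real.exp (lam i + lam j) := by
    rw [hDEE, sq, Finset.sum_mul_sum]
    simp_rw [← Real.exp_add]
  set B : Fin n → Fin n → ℝ := fun i j =>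
    (1 + lam i + lam j) + (if i = j then 2*(lam i)^2 + (4/3)*(lam i)^3 else 0) with hBdef
  have hB_le : ∀ i j, B i j ≤ Real.exp (lam i + lam j) := by
    intro i j
    by_cases h : i = j
    · subst h
      simp only [hBdef, if_pos rfl, if_true, eq_self_iff_true]
      have hc := cubic_le_exp (lam i)
      have h2x : lam i + lam i = 2 * lam i := by ring
      rw [h2x]
      linarith
    · simp only [hBdef, if_neg h, add_zero]
      linarith [Real.add_one_le_exp (lam i + lam j)]
  have hBsum : ∑ i, ∑ j, B i j = (n:ℝ)^2 + 2*S2 + (4/3)*S3 := by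
    have hinner : ∀ i : Fin n, ∑ j, B i j
        = (n:ℝ) + (n:ℝ)*lam i + (2*(lam i)^2 + (4/3)*(lam i)^3) := by
      intro i
      simp only [hBdef]
      rw [Finset.sum_add_distrib, Finset.sum_add_distrib, Finset.sum_add_distrib, h0,
        Finset.sum_const, Finset.sum_const, Finset.card_univ, Fintype.card_fin]
      have hite : ∑ j, (if i = j then 2*(lam i)^2 + (4/3)*(lam i)^3 else 0)
          = 2*(lam i)^2 + (4/3)*(lam i)^3 := by
        simp
      rw [hite, nsmul_eq_mul, nsmul_eq_mul]
      ring
    rw [Finset.sum_congr rfl fun i _ => hinner i, Finset.sum_add_distrib,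
      Finset.sum_add_distrib, Finset.sum_const, Finset.card_univ, Fintype.card_fin,
      ← Finset.mul_sum, h0, nsmul_eq_mul]
    have hrest : ∑ i, (2*(lam i)^2 + (4/3)*(lam i)^3) = 2*S2 + (4/3)*S3 := by
      rw [Finset.sum_add_distrib, ← Finset.mul_sum, ← Finset.mul_sum, ← hS2def, ← hS3def]
    rw [hrest]
    ring
  have hlow : (n:ℝ)^2 + 2*S2 + (4/3)*S3 ≤ DEE G ^ 2 := by
    rw [hprod, ← hBsum]
    exact Finset.sum_le_sum fun i _ => Finset.sum_le_sum fun j _ => hB_le i j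
  have hS2m : 2*(m:ℝ) ≤ S2 := by rw [h2]; exact h2m
  have hlb : (n:ℝ)^2 + 4*(m:ℝ) ≤ DEE G ^ 2 := by linarith
  have hlower : Real.sqrt ((n:ℝ)^2 + 4*(m:ℝ)) ≤ DEE G := by
    have := Real.sqrt_le_sqrt hlb
    rwa [Real.sqrt_sq hDEEpos.le] at this
  -- upper bound machinery
  set T : ℝ := Real.sqrt S2 with hTdef
  have hT0 : 0 ≤ T := Real.sqrt_nonneg _
  have hTR : T ≤ R := by
    rw [hTdef, hRdef]
    have h1 : S2 ≤ (G.diam:ℝ)^2 * ((n:ℝ)*((n:ℝ)-1)) := by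
      rw [h2]
      calc ∑ i, ∑ j, (G.dist i j:ℝ)^2 ≤ (n:ℝ)*((n:ℝ)-1) * (G.diam:ℝ)^2 := hd2sum
        _ = (G.diam:ℝ)^2 * ((n:ℝ)*((n:ℝ)-1)) := by ring
    calc Real.sqrt S2 ≤ Real.sqrt ((G.diam:ℝ)^2 * ((n:ℝ)*((n:ℝ)-1))) := Real.sqrt_le_sqrt h1
      _ = (G.diam:ℝ) * Real.sqrt ((n:ℝ)*((n:ℝ)-1)) := by
          rw [Real.sqrt_mul (sq_nonneg _), Real.sqrt_sq (Nat.cast_nonneg _)]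
  have hsplit : DEE G = (n:ℝ) + ∑ i, (Real.exp (lam i) - 1 - lam i) := by
    rw [hDEE]
    have : ∑ i, (Real.exp (lam i) - 1 - lam i)
        = (∑ i, Real.exp (lam i)) - (n:ℝ) - ∑ i, lam i := by
      rw [Finset.sum_sub_distrib, Finset.sum_sub_distrib, Finset.sum_const,
        Finset.card_univ, Fintype.card_fin]
      simp [nsmul_eq_mul]
    rw [this, h0]
    ring
  have hphiabs : ∑ i, (Real.exp (lam i) - 1 - lam i)
      ≤ ∑ i, (Real.exp |lam i| - 1 - |lam i|) :=
    Finset.sum_le_sum fun i _ => phi_abs (lam i)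
  have hphiT : ∑ i, (Real.exp |lam i| - 1 - |lam i|) ≤ Real.exp T - 1 - T := by
    have h := sum_phi_le (fun i => |lam i|) (fun i => abs_nonneg _)
    simp only [sq_abs] at h
    rw [hTdef, hS2def]
    exact h
  have hupper' : DEE G ≤ (n:ℝ) - 1 + Real.exp R - T := by
    have hexpTR : Real.exp T ≤ Real.exp R := Real.exp_le_exp.mpr hTR
    rw [hsplit]
    linarith
  have hupper : DEE G ≤ (n:ℝ) - 1 + Real.exp R := by linarith
  -- case split
  by_cases hn1 : n = 1
  · -- equality case
    subst hn1
    have hm0 : m = 0 := by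
      rw [← hm, Finset.card_eq_zero]
      ext e
      induction e using Sym2.ind with
      | _ x y =>
        have hxy : x = y := Subsingleton.elim x y
        subst hxy
        simp
    subst hm0
    have hS20 : S2 = 0 := by
      rw [h2]
      apply Finset.sum_eq_zero
      intro i _
      apply Finset.sum_eq_zero
      intro j _
      have hij : i = j := Subsingleton.elim i j
      subst hij
      simp [SimpleGraph.dist_self]
    have hlam0 : ∀ i, lam i = 0 := by
      intro i
      have hle : lam i ^ 2 ≤ S2 := by
        rw [hS2def]
        exact Finset.single_le_sum (fun j _ => sq_nonneg (lam j)) (Finset.mem_univ i)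
      have hz : lam i ^ 2 = 0 := le_antisymm (by rw [hS20] at hle; exact hle) (sq_nonneg _)
      exact pow_eq_zero_iff (by norm_num : (2:ℕ) ≠ 0) |>.mp hz
    have hDEE1 : DEE G = 1 := by
      rw [hDEE]
      rw [Finset.sum_congr rfl fun i _ => by rw [hlam0 i, Real.exp_zero]]
      simp
    have hL : Real.sqrt (((1:ℕ):ℝ)^2 + 4*((0:ℕ):ℝ)) = 1 := by
      have h : (((1:ℕ):ℝ))^2 + 4*((0:ℕ):ℝ) = 1 := by norm_num
      rw [h, Real.sqrt_one]
    have hR1 : ((1:ℕ):ℝ) - 1 + Real.exp R = 1 := by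
      rw [hRdef]
      have h : ((1:ℕ):ℝ)*(((1:ℕ):ℝ)-1) = 0 := by norm_num
      rw [h, Real.sqrt_zero, mul_zero, Real.exp_zero]
      norm_num
    refine ⟨⟨?_, ?_⟩, ⟨fun _ => rfl, fun _ => ?_⟩, ⟨fun _ => rfl, fun _ => ?_⟩⟩
    · rw [hDEE1, hL]
    · rw [hDEE1, hR1]
    · rw [hDEE1, hL]
    · rw [hDEE1, hR1]
  · -- strict case: n ≥ 2
    have hn2 : 2 ≤ n := by omega
    set a : Fin n := ⟨0, by omega⟩ with ha
    set b : Fin n := ⟨1, by omega⟩ with hb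
    have hab : a ≠ b := by
      simp [ha, hb, Fin.ext_iff]
    have hd1 : 1 ≤ G.dist a b := hconn.pos_dist_of_ne hab
    have hS2pos : 0 < S2 := by
      rw [h2]
      have h1 : (1:ℝ) ≤ (G.dist a b : ℝ)^2 := by
        have : (1:ℝ) ≤ (G.dist a b : ℝ) := by exact_mod_cast hd1
        nlinarith
      have h2' : (G.dist a b : ℝ)^2 ≤ ∑ j, (G.dist a j : ℝ)^2 :=
        Finset.single_le_sum (f := fun j => ((G.dist a j : ℝ))^2)
          (fun j _ => sq_nonneg _) (Finset.mem_univ b)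
      have h3' : ∑ j, (G.dist a j : ℝ)^2 ≤ ∑ i, ∑ j, (G.dist i j : ℝ)^2 :=
        Finset.single_le_sum (f := fun i => ∑ j, ((G.dist i j : ℝ))^2)
          (fun i _ => Finset.sum_nonneg fun j _ => sq_nonneg _)
          (Finset.mem_univ a)
      linarith
    obtain ⟨i0, hi0⟩ : ∃ i, lam i ≠ 0 := by
      by_contra hall
      push_neg at hall
      have : S2 = 0 := by
        rw [hS2def]
        exact Finset.sum_eq_zero fun i _ => by rw [hall i]; ring
      linarith
    -- strict lower bound
    have hstrictlow : (n:ℝ)^2 + 2*S2 + (4/3)*S3 < DEE G ^ 2 := by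
      rw [hprod, ← hBsum]
      apply Finset.sum_lt_sum
      · intro i _
        exact Finset.sum_le_sum fun j _ => hB_le i j
      · refine ⟨i0, Finset.mem_univ i0, ?_⟩
        apply Finset.sum_lt_sum
        · intro j _
          exact hB_le i0 j
        · refine ⟨i0, Finset.mem_univ i0, ?_⟩
          simp only [hBdef, if_pos rfl, if_true, eq_self_iff_true]
          have hc := cubic_lt_exp hi0
          have h2x : lam i0 + lam i0 = 2 * lam i0 := by ring
          rw [h2x]
          linarith
    have hltb : (n:ℝ)^2 + 4*(m:ℝ) < DEE G ^ 2 := by linarith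
    have hlower_strict : Real.sqrt ((n:ℝ)^2 + 4*(m:ℝ)) < DEE G := by
      have hnn : (0:ℝ) ≤ (n:ℝ)^2 + 4*(m:ℝ) := by positivity
      have := Real.sqrt_lt_sqrt hnn hltb
      rwa [Real.sqrt_sq hDEEpos.le] at this
    -- strict upper bound
    have hTpos : 0 < T := Real.sqrt_pos.mpr hS2pos
    have hupper_strict : DEE G < (n:ℝ) - 1 + Real.exp R := by linarith
    refine ⟨⟨hlower, hupper⟩, ⟨fun h => absurd h (ne_of_lt hlower_strict), fun h => absurd h hn1⟩,
      ⟨fun h => absurd h (ne_of_lt hupper_strict), fun h => absurd h hn1⟩⟩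

end DistanceEstrada
end

section
/- Let G be a connected simple graph on n vertices with maximum degree Δ₁ and second maximum degree Δ₂. Then the largest distance eigenvalue satisfies λ_1(D) ≥ √((2n-2-Δ₁)(2n-2-Δ₂)), with equality if and only if G is a regular graph with diameter at most 2. -/
open Matrix


namespace DistanceEstrada

variable {n : ℕ}

/-- dot product against mulVec moves the (real) matrix across as its transpose/star. -/
lemma dot_mulVec_star {n : ℕ} (M : Matrix (Fin n) (Fin n) ℝ) (a b : Fin n → ℝ) :
    a ⬝ᵥ (M *ᵥ b) = (star M *ᵥ a) ⬝ᵥ b := by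
  simp only [dotProduct, Matrix.mulVec, dotProduct,
    Matrix.star_apply, star_trivial, Finset.mul_sum, Finset.sum_mul]
  rw [Finset.sum_comm]
  apply Finset.sum_congr rfl
  intro i _
  apply Finset.sum_congr rfl
  intro j _
  ring

/-- Rayleigh-type bound: the quadratic form is at most `t * ‖x‖²` when all eigenvalues `≤ t`. -/
lemma rayleigh_le {n : ℕ} {A : Matrix (Fin n) (Fin n) ℝ} (hA : A.IsHermitian) {t : ℝ}
    (ht : ∀ i, hA.eigenvalues i ≤ t) (x : Fin n → ℝ) :
    x ⬝ᵥ (A *ᵥ x) ≤ t * (x ⬝ᵥ x) := by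
  set U : Matrix (Fin n) (Fin n) ℝ := (hA.eigenvectorUnitary : Matrix (Fin n) (Fin n) ℝ) with hU
  have hUU : U * star U = 1 := (Matrix.mem_unitaryGroup_iff).mp hA.eigenvectorUnitary.2
  set y : Fin n → ℝ := star U *ᵥ x with hy
  have key1 : x ⬝ᵥ (A *ᵥ x) = ∑ i, hA.eigenvalues i * (y i)^2 := by
    conv_lhs => rw [hA.spectral_theorem, Unitary.conjStarAlgAut_apply]
    rw [← Matrix.mulVec_mulVec, ← Matrix.mulVec_mulVec, dot_mulVec_star, ← hy]
    simp only [dotProduct, Matrix.mulVec_diagonal]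
    apply Finset.sum_congr rfl
    intro i _
    simp only [Function.comp_apply, RCLike.ofReal_real_eq_id, id_eq]
    ring
  have key2 : x ⬝ᵥ x = ∑ i, (y i)^2 := by
    have : y ⬝ᵥ y = x ⬝ᵥ x := by
      nth_rewrite 2 [hy]
      rw [dot_mulVec_star, star_star, Matrix.mulVec_mulVec, hUU, Matrix.one_mulVec,
        dotProduct_comm]
    rw [← this]
    simp [dotProduct, sq]
  rw [key1, key2, Finset.mul_sum]
  apply Finset.sum_le_sum
  intro i _
  exact mul_le_mul_of_nonneg_right (ht i) (sq_nonneg _)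

/-- Each eigenvalue (from `IsHermitian.eigenvalues`) is an eigenvalue of `toLin'`. -/
lemma hasEigenvalue_of_isHermitian {n : ℕ} {A : Matrix (Fin n) (Fin n) ℝ} (hA : A.IsHermitian)
    (i : Fin n) : Module.End.HasEigenvalue (Matrix.toLin' A) (hA.eigenvalues i) := by
  have h1 : Matrix.toLin' A (⇑(hA.eigenvectorBasis i) : Fin n → ℝ)
      = hA.eigenvalues i • (⇑(hA.eigenvectorBasis i) : Fin n → ℝ) := by
    ext j
    have := congrFun (hA.mulVec_eigenvectorBasis i) j
    simpa [Matrix.toLin'_apply] using this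
  have h2 : (⇑(hA.eigenvectorBasis i) : Fin n → ℝ) ≠ 0 := by
    intro h
    apply hA.eigenvectorBasis.orthonormal.ne_zero i
    ext j
    exact congrFun h j
  exact Module.End.hasEigenvalue_of_hasEigenvector
    ⟨Module.End.mem_eigenspace_iff.mpr h1, h2⟩


variable {n : ℕ}

/-- Lower-bound profile for distances. -/
noncomputable def Ff (G : SimpleGraph (Fin n)) [DecidableRel G.Adj] (i j : Fin n) : ℝ :=
  if i = j then 0 else if G.Adj i j then 1 else 2

lemma Ff_le_dist (G : SimpleGraph (Fin n)) [DecidableRel G.Adj] (hconn : G.Connected)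
    (i j : Fin n) : Ff G i j ≤ (G.dist i j : ℝ) := by
  unfold Ff
  by_cases h : i = j
  · simp [h]
  · by_cases hadj : G.Adj i j
    · have : G.dist i j = 1 := SimpleGraph.dist_eq_one_iff_adj.mpr hadj
      simp [h, hadj, this]
    · have h1 : 0 < G.dist i j := hconn.pos_dist_of_ne h
      have h2 : G.dist i j ≠ 1 := fun hc => hadj (SimpleGraph.dist_eq_one_iff_adj.mp hc)
      have : 2 ≤ G.dist i j := by omega
      have : (2 : ℝ) ≤ (G.dist i j : ℝ) := by exact_mod_cast this
      simp [h, hadj, this]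

lemma dist_le_Ff (G : SimpleGraph (Fin n)) [DecidableRel G.Adj]
    (h2 : ∀ a b : Fin n, G.dist a b ≤ 2) (i j : Fin n) : (G.dist i j : ℝ) ≤ Ff G i j := by
  unfold Ff
  by_cases h : i = j
  · simp [h, SimpleGraph.dist_self]
  · by_cases hadj : G.Adj i j
    · have : G.dist i j = 1 := SimpleGraph.dist_eq_one_iff_adj.mpr hadj
      simp [h, hadj, this]
    · have : (G.dist i j : ℝ) ≤ 2 := by exact_mod_cast h2 i j
      simp [h, hadj, this]

lemma rowsum_Ff (G : SimpleGraph (Fin n)) [DecidableRel G.Adj] (i : Fin n) :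
    ∑ j, Ff G i j = 2 * (n : ℝ) - 2 - (G.degree i : ℝ) := by
  have hrw : ∀ j, Ff G i j
      = 2 - (if i = j then (2:ℝ) else 0) - (if G.Adj i j then (1:ℝ) else 0) := by
    intro j
    unfold Ff
    by_cases h : i = j
    · subst h; simp
    · by_cases hadj : G.Adj i j <;> simp [h, hadj] <;> norm_num
  rw [Finset.sum_congr rfl (fun j _ => hrw j), Finset.sum_sub_distrib, Finset.sum_sub_distrib]
  have h1 : ∑ _j : Fin n, (2:ℝ) = 2 * n := by
    simp [Finset.sum_const, mul_comm]
  have h2 : ∑ j : Fin n, (if i = j then (2:ℝ) else 0) = 2 := by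
    simp
  have h3 : ∑ j : Fin n, (if G.Adj i j then (1:ℝ) else 0) = (G.degree i : ℝ) := by
    rw [Finset.sum_boole, SimpleGraph.degree, SimpleGraph.neighborFinset_eq_filter]
  rw [h1, h2, h3]

lemma ediam_ne_top (G : SimpleGraph (Fin n)) (hconn : G.Connected) : G.ediam ≠ ⊤ := by
  rw [SimpleGraph.ediam_def, ← Finset.sup_univ_eq_iSup]
  have : (Finset.univ.sup fun p : Fin n × Fin n => G.edist p.1 p.2) < ⊤ := by
    rw [Finset.sup_lt_iff (by simp)]
    intro p _
    exact lt_top_iff_ne_top.mpr (SimpleGraph.edist_ne_top_iff_reachable.mpr (hconn p.1 p.2))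
  exact this.ne

lemma diam_le_two (G : SimpleGraph (Fin n)) (hconn : G.Connected)
    (h : ∀ a b : Fin n, G.dist a b ≤ 2) : G.diam ≤ 2 := by
  have hediam : G.ediam ≤ (2 : ℕ∞) := by
    apply SimpleGraph.ediam_le_of_edist_le
    intro a b
    have hne : G.edist a b ≠ ⊤ := SimpleGraph.edist_ne_top_iff_reachable.mpr (hconn a b)
    lift G.edist a b to ℕ using hne with k hk
    have : k ≤ 2 := by
      have := h a b
      rwa [SimpleGraph.dist, ← hk, ENat.toNat_coe] at this
    exact_mod_cast this
  calc G.diam = G.ediam.toNat := rfl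
    _ ≤ (2 : ℕ∞).toNat := ENat.toNat_le_toNat hediam (by simp)
    _ = 2 := rfl

lemma dist_le_two (G : SimpleGraph (Fin n)) (hconn : G.Connected)
    (h : G.diam ≤ 2) (a b : Fin n) : G.dist a b ≤ 2 :=
  le_trans (SimpleGraph.dist_le_diam (ediam_ne_top G hconn)) h


lemma amgm_aux {a b : ℝ} {m : ℕ} (ha : 0 < a) (hab : a ≤ b) (hm : (2:ℝ) ≤ m) :
    (m : ℝ) * Real.sqrt (a * b) ≤ a + ((m:ℝ) - 1) * b := by
  set p := Real.sqrt a with hp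
  set q := Real.sqrt b with hq
  have hpa : p ^ 2 = a := Real.sq_sqrt ha.le
  have hqb : q ^ 2 = b := Real.sq_sqrt (ha.le.trans hab)
  have hpq : p ≤ q := Real.sqrt_le_sqrt hab
  have hp0 : 0 ≤ p := Real.sqrt_nonneg a
  have hs : Real.sqrt (a * b) = p * q := Real.sqrt_mul ha.le b
  have key : p^2 + ((m:ℝ)-1)*q^2 - (m:ℝ)*(p*q) = (q-p)*(((m:ℝ)-1)*q - p) := by ring
  have h1 : 0 ≤ (q-p)*(((m:ℝ)-1)*q - p) := by
    apply mul_nonneg (by linarith)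
    nlinarith [hp0.trans hpq]
  rw [hs]
  nlinarith [key, h1]

lemma amgm_eq_aux {a b : ℝ} {m : ℕ} (ha : 0 < a) (hab : a ≤ b) (hm : (2:ℝ) ≤ m)
    (heq : a + ((m:ℝ) - 1) * b = (m:ℝ) * Real.sqrt (a * b)) : a = b := by
  set p := Real.sqrt a with hp
  set q := Real.sqrt b with hq
  have hpa : p ^ 2 = a := Real.sq_sqrt ha.le
  have hqb : q ^ 2 = b := Real.sq_sqrt (ha.le.trans hab)
  have hpq : p ≤ q := Real.sqrt_le_sqrt hab
  have hp0 : 0 < p := Real.sqrt_pos.mpr ha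
  have hs : Real.sqrt (a * b) = p * q := Real.sqrt_mul ha.le b
  rw [hs] at heq
  have key : (q-p)*(((m:ℝ)-1)*q - p) = 0 := by nlinarith [heq]
  have hq0 : 0 < q := lt_of_lt_of_le hp0 hpq
  have : q - p = 0 := by
    rcases mul_eq_zero.mp key with h | h
    · exact h
    · nlinarith
  have : p = q := by linarith
  rw [← hpa, ← hqb, this]


set_option maxHeartbeats 1000000 in
/-- **Lemma 3.** For a connected graph `G` on `n` vertices with maximum degree `Δ₁` and second
maximum degree `Δ₂`, the largest distance eigenvalue satisfies
`λ₁(D) ≥ √((2n-2-Δ₁)(2n-2-Δ₂))`, with equality iff `G` is regular with diameter at most 2. -/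
theorem largest_distance_eigenvalue_lower_bound {n : ℕ} (G : SimpleGraph (Fin n))
    [DecidableRel G.Adj] (hconn : G.Connected) (Δ₁ Δ₂ : ℕ)
    (hΔ : ∃ u : Fin n, G.degree u = Δ₁ ∧ (∀ w, G.degree w ≤ Δ₁) ∧
      (∃ v, v ≠ u ∧ G.degree v = Δ₂) ∧ ∀ w, w ≠ u → G.degree w ≤ Δ₂)
    (lam1 : ℝ) (hlam1 : IsGreatest (Set.range (distEig G)) lam1) :
    Real.sqrt ((2 * (n : ℝ) - 2 - Δ₁) * (2 * (n : ℝ) - 2 - Δ₂)) ≤ lam1 ∧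
    (Real.sqrt ((2 * (n : ℝ) - 2 - Δ₁) * (2 * (n : ℝ) - 2 - Δ₂)) = lam1 ↔
      (∃ r : ℕ, G.IsRegularOfDegree r) ∧ G.diam ≤ 2) := by
  classical
  obtain ⟨u, hu, hmax, ⟨v, hvu, hv⟩, hsec⟩ := hΔ
  have hn2 : 2 ≤ n := by
    have : Nontrivial (Fin n) := ⟨⟨v, u, hvu⟩⟩
    exact (by simpa using Fintype.one_lt_card (α := Fin n) : 1 < n)
  have hnR : (2:ℝ) ≤ (n:ℝ) := by exact_mod_cast hn2
  set a : ℝ := 2 * (n : ℝ) - 2 - (Δ₁ : ℝ) with hadef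
  set b : ℝ := 2 * (n : ℝ) - 2 - (Δ₂ : ℝ) with hbdef
  have hΔ1n : (Δ₁ : ℝ) ≤ (n : ℝ) - 1 := by
    have h := G.degree_lt_card_verts u
    rw [Fintype.card_fin, hu] at h
    have : Δ₁ + 1 ≤ n := h
    have : ((Δ₁ : ℝ) + 1) ≤ (n : ℝ) := by exact_mod_cast this
    linarith
  have ha : 0 < a := by rw [hadef]; linarith
  have hΔ21 : Δ₂ ≤ Δ₁ := hv ▸ hmax v
  have hab : a ≤ b := by
    rw [hadef, hbdef]
    have : (Δ₂ : ℝ) ≤ (Δ₁ : ℝ) := by exact_mod_cast hΔ21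
    linarith
  have hb : 0 < b := lt_of_lt_of_le ha hab
  have hlam_ub : ∀ i, distEig G i ≤ lam1 := fun i => hlam1.2 ⟨i, rfl⟩
  set ones : Fin n → ℝ := fun _ => 1 with hones
  have hRay := rayleigh_le (distMatrix_isHermitian G) hlam_ub ones
  have hdot : ones ⬝ᵥ ones = (n : ℝ) := by simp [hones, dotProduct]
  have hSval : ones ⬝ᵥ (distMatrix G *ᵥ ones) = ∑ i, ∑ j, (G.dist i j : ℝ) := by
    simp [hones, dotProduct, Matrix.mulVec, distMatrix]
  rw [hdot, hSval] at hRay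
  -- h2 : sum of profile rows ≤ total distance sum
  have hrowF : ∀ i : Fin n, (2 * (n:ℝ) - 2 - (G.degree i : ℝ)) ≤ ∑ j, (G.dist i j : ℝ) := by
    intro i
    rw [← rowsum_Ff G i]
    exact Finset.sum_le_sum (fun j _ => Ff_le_dist G hconn i j)
  have h2 : ∑ i, (2 * (n:ℝ) - 2 - (G.degree i : ℝ)) ≤ ∑ i, ∑ j, (G.dist i j : ℝ) :=
    Finset.sum_le_sum (fun i _ => hrowF i)
  -- h3
  have hsplit : ∑ i, (2 * (n:ℝ) - 2 - (G.degree i : ℝ))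
      = (2 * (n:ℝ) - 2 - (G.degree u : ℝ))
        + ∑ i ∈ Finset.univ.erase u, (2 * (n:ℝ) - 2 - (G.degree i : ℝ)) :=
    (Finset.add_sum_erase _ _ (Finset.mem_univ u)).symm
  have hcard : ((Finset.univ.erase u).card : ℝ) = (n:ℝ) - 1 := by
    rw [Finset.card_erase_of_mem (Finset.mem_univ u)]
    simp only [Finset.card_univ, Fintype.card_fin]
    have : 1 ≤ n := by omega
    push_cast [this]
    ring
  have hterm : ∀ i ∈ Finset.univ.erase u, b ≤ 2 * (n:ℝ) - 2 - (G.degree i : ℝ) := by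
    intro i hi
    have hne : i ≠ u := Finset.ne_of_mem_erase hi
    have : (G.degree i : ℝ) ≤ (Δ₂ : ℝ) := by exact_mod_cast hsec i hne
    rw [hbdef]; linarith
  have herase : ((n:ℝ) - 1) * b ≤ ∑ i ∈ Finset.univ.erase u, (2 * (n:ℝ) - 2 - (G.degree i : ℝ)) := by
    have := Finset.card_nsmul_le_sum (Finset.univ.erase u)
      (fun i => 2 * (n:ℝ) - 2 - (G.degree i : ℝ)) b hterm
    rwa [nsmul_eq_mul, hcard] at this
  have h3 : a + ((n:ℝ) - 1) * b ≤ ∑ i, (2 * (n:ℝ) - 2 - (G.degree i : ℝ)) := by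
    rw [hsplit, hu, ← hadef]
    linarith
  have h4 : (n:ℝ) * Real.sqrt (a * b) ≤ a + ((n:ℝ) - 1) * b := amgm_aux ha hab hnR
  have hn0 : (0:ℝ) < (n:ℝ) := by linarith
  have hmain : Real.sqrt (a * b) ≤ lam1 := by
    have : (n:ℝ) * Real.sqrt (a * b) ≤ (n:ℝ) * lam1 := by linarith
    exact le_of_mul_le_mul_left this hn0
  refine ⟨hmain, ?_, ?_⟩
  · -- equality → regular ∧ diam ≤ 2
    intro heq
    have hRay' : ∑ i, ∑ j, (G.dist i j : ℝ) ≤ Real.sqrt (a * b) * (n:ℝ) := heq ▸ hRay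
    have e2 : ∑ i, (2 * (n:ℝ) - 2 - (G.degree i : ℝ)) = ∑ i, ∑ j, (G.dist i j : ℝ) := by
      linarith [h2, h3, h4, hRay']
    have e3 : a + ((n:ℝ) - 1) * b = ∑ i, (2 * (n:ℝ) - 2 - (G.degree i : ℝ)) := by
      linarith [h2, h3, h4, hRay']
    have e4 : a + ((n:ℝ) - 1) * b = (n:ℝ) * Real.sqrt (a * b) := by
      linarith [h2, h3, h4, hRay']
    -- a = b hence Δ₁ = Δ₂
    have habe : a = b := amgm_eq_aux ha hab hnR e4
    have hΔe : Δ₁ = Δ₂ := by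
      have : (Δ₁ : ℝ) = (Δ₂ : ℝ) := by rw [hadef, hbdef] at habe; linarith
      exact_mod_cast this
    -- degrees on the erase are all Δ₂
    have herase_eq : ∑ i ∈ Finset.univ.erase u, (2 * (n:ℝ) - 2 - (G.degree i : ℝ))
        = ((n:ℝ) - 1) * b := by
      rw [hsplit, hu, ← hadef] at e3
      linarith
    have hdeg : ∀ i ∈ Finset.univ.erase u, (2 * (n:ℝ) - 2 - (G.degree i : ℝ)) - b = 0 := by
      have hzero : ∑ i ∈ Finset.univ.erase u, ((2 * (n:ℝ) - 2 - (G.degree i : ℝ)) - b) = 0 := by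
        rw [Finset.sum_sub_distrib, herase_eq, Finset.sum_const, nsmul_eq_mul, hcard]
        ring
      exact fun i hi => (Finset.sum_eq_zero_iff_of_nonneg
        (fun i hi => by linarith [hterm i hi])).mp hzero i hi
    have hregular : G.IsRegularOfDegree Δ₂ := by
      intro w
      by_cases hw : w = u
      · rw [hw, hu, hΔe]
      · have := hdeg w (Finset.mem_erase.mpr ⟨hw, Finset.mem_univ w⟩)
        have : (G.degree w : ℝ) = (Δ₂ : ℝ) := by rw [hbdef] at this; linarith
        exact_mod_cast this
    -- distances all equal the profile hence ≤ 2
    have hrow_eq : ∀ i ∈ Finset.univ, (∑ j, (G.dist i j : ℝ)) - (2 * (n:ℝ) - 2 - (G.degree i : ℝ)) = 0 := by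
      have hzero : ∑ i, ((∑ j, (G.dist i j : ℝ)) - (2 * (n:ℝ) - 2 - (G.degree i : ℝ))) = 0 := by
        rw [Finset.sum_sub_distrib, e2]
        ring
      exact fun i hi => (Finset.sum_eq_zero_iff_of_nonneg
        (fun i _ => by linarith [hrowF i])).mp hzero i hi
    have hentry : ∀ i j : Fin n, (G.dist i j : ℝ) = Ff G i j := by
      intro i j
      have hri := hrow_eq i (Finset.mem_univ i)
      have hrowi : ∑ k, (G.dist i k : ℝ) = ∑ k, Ff G i k := by
        rw [rowsum_Ff G i]; linarith
      have hz : ∑ k, ((G.dist i k : ℝ) - Ff G i k) = 0 := by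
        rw [Finset.sum_sub_distrib, hrowi]; ring
      have := (Finset.sum_eq_zero_iff_of_nonneg
        (fun k _ => by linarith [Ff_le_dist G hconn i k])).mp hz j (Finset.mem_univ j)
      linarith
    have hdist2 : ∀ i j : Fin n, G.dist i j ≤ 2 := by
      intro i j
      have hF : Ff G i j ≤ 2 := by
        unfold Ff
        by_cases h : i = j
        · simp [h]
        · by_cases hadj : G.Adj i j <;> simp [h, hadj] <;> norm_num
      have : (G.dist i j : ℝ) ≤ 2 := (hentry i j).le.trans hF
      exact_mod_cast this
    exact ⟨⟨Δ₂, hregular⟩, diam_le_two G hconn hdist2⟩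
  · -- regular ∧ diam ≤ 2 → equality
    rintro ⟨⟨r, hreg⟩, hdiam⟩
    have hr1 : r = Δ₁ := by rw [← hu, hreg u]
    have hr2 : Δ₂ = r := by rw [← hv, hreg v]
    have habe : a = b := by rw [hadef, hbdef, ← hr1, hr2]
    have hsq : Real.sqrt (a * b) = a := by
      rw [← habe, Real.sqrt_mul_self ha.le]
    -- upper bound via Gershgorin
    obtain ⟨i, hi⟩ := hlam1.1
    have hev : Module.End.HasEigenvalue (Matrix.toLin' (distMatrix G)) lam1 :=
      hi ▸ hasEigenvalue_of_isHermitian (distMatrix_isHermitian G) i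
    obtain ⟨k, hk⟩ := eigenvalue_mem_ball hev
    rw [Metric.mem_closedBall, Real.dist_eq] at hk
    have hDkk : distMatrix G k k = 0 := by simp [distMatrix]
    rw [hDkk, sub_zero] at hk
    have hnorm : ∀ j, ‖distMatrix G k j‖ = (G.dist k j : ℝ) := by
      intro j
      simp [distMatrix, Real.norm_eq_abs, abs_of_nonneg]
    have hsum : ∑ j ∈ Finset.univ.erase k, ‖distMatrix G k j‖ ≤ a := by
      calc ∑ j ∈ Finset.univ.erase k, ‖distMatrix G k j‖
          = ∑ j ∈ Finset.univ.erase k, (G.dist k j : ℝ) :=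
            Finset.sum_congr rfl (fun j _ => hnorm j)
        _ ≤ ∑ j, (G.dist k j : ℝ) :=
            Finset.sum_le_sum_of_subset_of_nonneg (Finset.erase_subset _ _)
              (fun j _ _ => Nat.cast_nonneg _)
        _ ≤ ∑ j, Ff G k j :=
            Finset.sum_le_sum (fun j _ => dist_le_Ff G (dist_le_two G hconn hdiam) k j)
        _ = 2 * (n:ℝ) - 2 - (G.degree k : ℝ) := rowsum_Ff G k
        _ = a := by rw [hreg k, hr1, hadef]
    have hub : lam1 ≤ a := le_trans (le_abs_self lam1) (le_trans hk hsum)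
    rw [hsq]
    linarith [hmain, hsq ▸ hmain]


end DistanceEstrada
end

section
/- Let G be a connected simple graph on n ≥ 3 vertices. The smallest distance eigenvalue λ_n(D) equals -2 if and only if G is a complete s-partite graph K_{n_1,...,n_s} for some s with 2 ≤ s ≤ n-1 and n_1 + ... + n_s = n. -/
namespace DistanceEstrada

variable {n : ℕ}

section Helpers
open Matrix

-- [PASTE a.lean lemmas]
lemma psd_of_le_eigenvalues {m : ℕ} {A : Matrix (Fin m) (Fin m) ℝ} (hA : A.IsHermitian)
    {c : ℝ} (hc : ∀ i, c ≤ hA.eigenvalues i) : (A - c • 1).PosSemidef := by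
  have hU : (hA.eigenvectorUnitary : Matrix (Fin m) (Fin m) ℝ) *
      star (hA.eigenvectorUnitary : Matrix (Fin m) (Fin m) ℝ) = 1 :=
    (Matrix.mem_unitaryGroup_iff).mp hA.eigenvectorUnitary.2
  have key : A - c • 1 = (hA.eigenvectorUnitary : Matrix (Fin m) (Fin m) ℝ) *
      diagonal (fun i => hA.eigenvalues i - c) *
      star (hA.eigenvectorUnitary : Matrix (Fin m) (Fin m) ℝ) := by
    have hs := hA.spectral_theorem
    have hd : diagonal (fun i => hA.eigenvalues i - c) =
        diagonal (RCLike.ofReal ∘ hA.eigenvalues) - c • (1 : Matrix (Fin m) (Fin m) ℝ) := by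
      ext i j
      by_cases h : i = j <;>
        simp [Matrix.diagonal_apply, h, Matrix.one_apply, RCLike.ofReal_real_eq_id]
    rw [Unitary.conjStarAlgAut_apply] at hs
    rw [hd, Matrix.mul_sub, Matrix.sub_mul, ← hs]
    congr 1
    rw [Matrix.mul_smul, Matrix.smul_mul, Matrix.mul_one, hU]
  rw [key]
  have := (Matrix.posSemidef_diagonal_iff.mpr
      fun i => sub_nonneg.mpr (hc i)).mul_mul_conjTranspose_same
      (hA.eigenvectorUnitary : Matrix (Fin m) (Fin m) ℝ)
  simpa [Matrix.star_eq_conjTranspose] using this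

lemma rayleigh_lower {m : ℕ} {A : Matrix (Fin m) (Fin m) ℝ} (hA : A.IsHermitian)
    {c : ℝ} (hc : ∀ i, c ≤ hA.eigenvalues i) (x : Fin m → ℝ) :
    c * (x ⬝ᵥ x) ≤ x ⬝ᵥ A *ᵥ x := by
  have h := (psd_of_le_eigenvalues hA hc).dotProduct_mulVec_nonneg x
  simp only [sub_mulVec, smul_mulVec, one_mulVec, dotProduct_sub, dotProduct_smul,
    star_trivial, smul_eq_mul] at h
  linarith

lemma exists_eigvec {m : ℕ} {A : Matrix (Fin m) (Fin m) ℝ} (hA : A.IsHermitian)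
    {c : ℝ} (hc : c ∈ Set.range hA.eigenvalues) :
    ∃ v : Fin m → ℝ, 0 < v ⬝ᵥ v ∧ v ⬝ᵥ A *ᵥ v = c * (v ⬝ᵥ v) := by
  obtain ⟨i, rfl⟩ := hc
  refine ⟨⇑(hA.eigenvectorBasis i), ?_, ?_⟩
  · have hne : ⇑(hA.eigenvectorBasis i) ≠ 0 := by
      intro h
      have := hA.eigenvectorBasis.orthonormal.1 i
      rw [show (hA.eigenvectorBasis i) = 0 from PiLp.ext (congrFun h)] at this
      simp at this
    have : ∃ j, (hA.eigenvectorBasis i) j ≠ 0 := by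
      by_contra hj
      push_neg at hj
      exact hne (funext hj)
    obtain ⟨j, hj⟩ := this
    have : 0 < ∑ k, (hA.eigenvectorBasis i) k * (hA.eigenvectorBasis i) k :=
      Finset.sum_pos' (fun k _ => mul_self_nonneg _)
        ⟨j, Finset.mem_univ j, mul_self_pos.mpr hj⟩
    simpa [dotProduct] using this
  · rw [hA.mulVec_eigenvectorBasis]
    simp [dotProduct_smul, smul_eq_mul, dotProduct, Finset.mul_sum, mul_comm,
      mul_left_comm]

-- [PASTE b.lean lemmas]
lemma quad_two {m : ℕ} (A : Matrix (Fin m) (Fin m) ℝ) {u v : Fin m} (huv : u ≠ v) :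
    (fun j => (if j = u then (1:ℝ) else 0) - if j = v then 1 else 0) ⬝ᵥ
      A *ᵥ (fun j => (if j = u then (1:ℝ) else 0) - if j = v then 1 else 0) =
      A u u - A u v - A v u + A v v := by
  have hrow : ∀ i, (A *ᵥ fun j => (if j = u then (1:ℝ) else 0) - if j = v then 1 else 0) i
      = A i u - A i v := by
    intro i
    simp [Matrix.mulVec, dotProduct, mul_sub, mul_ite, Finset.sum_sub_distrib,
      Finset.sum_ite_eq']
  simp only [dotProduct, hrow]
  have key : ∀ i, ((if i = u then (1:ℝ) else 0) - if i = v then 1 else 0) * (A i u - A i v)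
      = (if i = u then A u u - A u v else 0) - (if i = v then A v u - A v v else 0) := by
    intro i
    rcases eq_or_ne i u with rfl | h1
    · simp [huv, if_neg (by exact huv)]
    · rcases eq_or_ne i v with rfl | h2
      · simp [h1]
      · simp [h1, h2]
  rw [Finset.sum_congr rfl (fun i _ => key i), Finset.sum_sub_distrib]
  simp [Finset.sum_ite_eq']
  ring

lemma quad_three {m : ℕ} (A : Matrix (Fin m) (Fin m) ℝ) {u v w : Fin m}
    (huv : u ≠ v) (huw : u ≠ w) (hvw : v ≠ w) :
    (fun j => (if j = u then (1:ℝ) else 0) - 2 * (if j = v then 1 else 0)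
        + if j = w then 1 else 0) ⬝ᵥ
      A *ᵥ (fun j => (if j = u then (1:ℝ) else 0) - 2 * (if j = v then 1 else 0)
        + if j = w then 1 else 0) =
      (A u u - 2 * A u v + A u w) - 2 * (A v u - 2 * A v v + A v w)
        + (A w u - 2 * A w v + A w w) := by
  have hrow : ∀ i, (A *ᵥ fun j => (if j = u then (1:ℝ) else 0) - 2 * (if j = v then 1 else 0)
      + if j = w then 1 else 0) i = A i u - 2 * A i v + A i w := by
    intro i
    simp [Matrix.mulVec, dotProduct, mul_sub, mul_add, mul_ite, Finset.sum_sub_distrib,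
      Finset.sum_add_distrib, Finset.sum_ite_eq', mul_comm, mul_left_comm]
  simp only [dotProduct, hrow]
  have key : ∀ i, ((if i = u then (1:ℝ) else 0) - 2 * (if i = v then 1 else 0)
        + if i = w then 1 else 0) * (A i u - 2 * A i v + A i w)
      = (if i = u then A u u - 2 * A u v + A u w else 0)
        - 2 * (if i = v then A v u - 2 * A v v + A v w else 0)
        + (if i = w then A w u - 2 * A w v + A w w else 0) := by
    intro i
    rcases eq_or_ne i u with rfl | h1
    · simp [huv, huw]
    · rcases eq_or_ne i v with rfl | h2
      · simp [h1, hvw]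
      · rcases eq_or_ne i w with rfl | h3
        · simp [h1, h2]
        · simp [h1, h2, h3]
  rw [Finset.sum_congr rfl (fun i _ => key i), Finset.sum_add_distrib, Finset.sum_sub_distrib]
  rw [← Finset.mul_sum]
  simp [Finset.sum_ite_eq']

-- [PASTE c.lean lemmas]
lemma quad_multipartite_eq {m s : ℕ} (D : Matrix (Fin m) (Fin m) ℝ) (P : Fin m → Fin s)
    (hD : ∀ u v, D u v = if u = v then (0:ℝ) else if P u = P v then 2 else 1)
    (x : Fin m → ℝ) :
    x ⬝ᵥ D *ᵥ x = (∑ v, x v) * (∑ v, x v)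
      + (∑ k, (∑ v, if P v = k then x v else 0) * (∑ v, if P v = k then x v else 0))
      - 2 * (x ⬝ᵥ x) := by
  classical
  set T : ℝ := ∑ v, x v with hT
  set S : Fin s → ℝ := fun k => ∑ v, if P v = k then x v else 0 with hS
  have hrow : ∀ u, (D *ᵥ x) u = T + S (P u) - 2 * x u := by
    intro u
    have hterm : ∀ v, D u v * x v
        = x v + (if P v = P u then x v else 0) - 2 * (if v = u then x v else 0) := by
      intro v
      rcases eq_or_ne u v with rfl | h
      · simp [hD]; ring
      · rw [hD]
        rcases eq_or_ne (P u) (P v) with hp | hp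
        · rw [if_neg h, if_pos hp, if_pos hp.symm, if_neg (Ne.symm h)]
          ring
        · simp [h, Ne.symm h, hp, Ne.symm hp]
    calc (D *ᵥ x) u = ∑ v, D u v * x v := rfl
    _ = ∑ v, (x v + (if P v = P u then x v else 0) - 2 * (if v = u then x v else 0)) :=
        Finset.sum_congr rfl fun v _ => hterm v
    _ = T + S (P u) - 2 * x u := by
        rw [Finset.sum_sub_distrib, Finset.sum_add_distrib, ← Finset.mul_sum]
        simp [Finset.sum_ite_eq', hT, hS]
  have hfib : ∑ u, x u * S (P u) = ∑ k, S k * S k := by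
    have h1 : ∀ u, x u * S (P u) = ∑ k, (if P u = k then x u else 0) * S k := by
      intro u
      simp [ite_mul, Finset.sum_ite_eq]
    rw [Finset.sum_congr rfl fun u _ => h1 u, Finset.sum_comm]
    refine Finset.sum_congr rfl fun k _ => ?_
    rw [← Finset.sum_mul]
  calc x ⬝ᵥ D *ᵥ x = ∑ u, x u * (T + S (P u) - 2 * x u) := by
        simp only [dotProduct]
        exact Finset.sum_congr rfl fun u _ => by rw [hrow u]
  _ = (∑ u, x u) * T + (∑ u, x u * S (P u)) - 2 * ∑ u, x u * x u := by
        have hexp : ∀ u : Fin m, x u * (T + S (P u) - 2 * x u)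
            = x u * T + x u * S (P u) - 2 * (x u * x u) := fun u => by ring
        rw [Finset.sum_congr rfl fun u _ => hexp u, Finset.sum_sub_distrib,
          Finset.sum_add_distrib, ← Finset.sum_mul, ← Finset.mul_sum]
  _ = T * T + (∑ k, S k * S k) - 2 * (x ⬝ᵥ x) := by
        rw [hfib]
        simp [dotProduct, hT]

lemma quad_complete_eq {m : ℕ} (D : Matrix (Fin m) (Fin m) ℝ)
    (hD : ∀ u v, D u v = if u = v then (0:ℝ) else 1) (x : Fin m → ℝ) :
    x ⬝ᵥ D *ᵥ x = (∑ v, x v) * (∑ v, x v) - (x ⬝ᵥ x) := by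
  classical
  have hrow : ∀ u, (D *ᵥ x) u = (∑ v, x v) - x u := by
    intro u
    have hterm : ∀ v, D u v * x v = x v - (if v = u then x v else 0) := by
      intro v
      rcases eq_or_ne u v with rfl | h
      · simp [hD]
      · simp [hD, h, Ne.symm h]
    calc (D *ᵥ x) u = ∑ v, D u v * x v := rfl
    _ = ∑ v, (x v - (if v = u then x v else 0)) := Finset.sum_congr rfl fun v _ => hterm v
    _ = (∑ v, x v) - x u := by rw [Finset.sum_sub_distrib]; simp [Finset.sum_ite_eq']
  calc x ⬝ᵥ D *ᵥ x = ∑ u, x u * ((∑ v, x v) - x u) := by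
        simp only [dotProduct]
        exact Finset.sum_congr rfl fun u _ => by rw [hrow u]
  _ = (∑ v, x v) * (∑ v, x v) - (x ⬝ᵥ x) := by
        simp only [mul_sub, Finset.sum_sub_distrib, ← Finset.sum_mul, dotProduct]

end Helpers

open Matrix

/-- **Lemma 4, second part.** For a connected graph `G` on `n ≥ 3` vertices, the smallest distance
eigenvalue equals `-2` iff `G` is a complete `s`-partite graph `K_{n₁,…,n_s}` for some
`2 ≤ s ≤ n - 1`. -/
theorem least_distance_eigenvalue_eq_neg_two_iff {n : ℕ} (hn : 3 ≤ n)
    (G : SimpleGraph (Fin n)) (hconn : G.Connected)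
    (lamn : ℝ) (hlamn : IsLeast (Set.range (distEig G)) lamn) :
    lamn = -2 ↔
      ∃ s : ℕ, 2 ≤ s ∧ s ≤ n - 1 ∧ ∃ P : Fin n → Fin s,
        Function.Surjective P ∧ ∀ u v : Fin n, G.Adj u v ↔ P u ≠ P v := by
  classical
  have hlo : ∀ i, lamn ≤ (distMatrix_isHermitian G).eigenvalues i :=
    fun i => hlamn.2 ⟨i, rfl⟩
  have hlow : ∀ x : Fin n → ℝ, lamn * (x ⬝ᵥ x) ≤ x ⬝ᵥ (distMatrix G) *ᵥ x :=
    fun x => rayleigh_lower (distMatrix_isHermitian G) hlo x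
  obtain ⟨v0, hv0pos, hv0eq⟩ : ∃ v : Fin n → ℝ,
      0 < v ⬝ᵥ v ∧ v ⬝ᵥ (distMatrix G) *ᵥ v = lamn * (v ⬝ᵥ v) :=
    exists_eigvec (distMatrix_isHermitian G) hlamn.1
  have hDself : ∀ a : Fin n, distMatrix G a a = 0 := by
    intro a; simp [distMatrix]
  constructor
  · -- forward direction
    intro hlam
    have htrans : ∀ u v w : Fin n, ¬ G.Adj u v → ¬ G.Adj v w → ¬ G.Adj u w := by
      intro u v w huv hvw hadj
      have h1 : u ≠ v := by rintro rfl; exact hvw hadj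
      have h2 : v ≠ w := by rintro rfl; exact huv hadj
      have huw : u ≠ w := G.ne_of_adj hadj
      have d1 : G.dist u w = 1 := SimpleGraph.dist_eq_one_iff_adj.mpr hadj
      have duv2 : 2 ≤ G.dist u v := by
        have h0 : G.dist u v ≠ 0 := fun h => h1 (hconn.dist_eq_zero_iff.mp h)
        have hne1 : G.dist u v ≠ 1 := fun h => huv (SimpleGraph.dist_eq_one_iff_adj.mp h)
        omega
      have dvw2 : 2 ≤ G.dist v w := by
        have h0 : G.dist v w ≠ 0 := fun h => h2 (hconn.dist_eq_zero_iff.mp h)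
        have hne1 : G.dist v w ≠ 1 := fun h => hvw (SimpleGraph.dist_eq_one_iff_adj.mp h)
        omega
      have hQ := quad_three (distMatrix G) h1 huw h2
      have hxx := quad_three (1 : Matrix (Fin n) (Fin n) ℝ) h1 huw h2
      rw [Matrix.one_mulVec] at hxx
      rw [Matrix.one_apply_eq, Matrix.one_apply_eq, Matrix.one_apply_eq,
        Matrix.one_apply_ne h1, Matrix.one_apply_ne huw, Matrix.one_apply_ne h2,
        Matrix.one_apply_ne (Ne.symm h1), Matrix.one_apply_ne (Ne.symm huw),
        Matrix.one_apply_ne (Ne.symm h2)] at hxx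
      have hlx := hlow (fun j => ((if j = u then (1:ℝ) else 0) - 2 * if j = v then 1 else 0)
        + if j = w then 1 else 0)
      rw [hQ, hxx] at hlx
      rw [hDself, hDself, hDself] at hlx
      have e1 : distMatrix G u w = 1 := by
        show ((G.dist u w : ℝ) = 1)
        rw [d1]; norm_num
      have e2 : distMatrix G w u = 1 := by
        show ((G.dist w u : ℝ) = 1)
        rw [SimpleGraph.dist_comm, d1]; norm_num
      have e3 : distMatrix G v u = distMatrix G u v := by
        show ((G.dist v u : ℝ) = (G.dist u v : ℝ))
        rw [SimpleGraph.dist_comm]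
      have e4 : distMatrix G w v = distMatrix G v w := by
        show ((G.dist w v : ℝ) = (G.dist v w : ℝ))
        rw [SimpleGraph.dist_comm]
      rw [e1, e2, e3, e4] at hlx
      have b1 : (2:ℝ) ≤ distMatrix G u v := by
        simp only [distMatrix]; exact_mod_cast duv2
      have b2 : (2:ℝ) ≤ distMatrix G v w := by
        simp only [distMatrix]; exact_mod_cast dvw2
      rw [hlam] at hlx
      nlinarith [hlx, b1, b2]
    let st : Setoid (Fin n) :=
      ⟨fun a b => ¬ G.Adj a b,
        ⟨fun a => G.irrefl, fun {a b} h hadj => h hadj.symm,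
          fun {a b c} h1 h2 => htrans a b c h1 h2⟩⟩
    haveI : Fintype (Quotient st) := Fintype.ofFinite _
    set s : ℕ := Fintype.card (Quotient st) with hs
    let e : Quotient st ≃ Fin s := Fintype.equivFin (Quotient st)
    let P : Fin n → Fin s := fun u => e (Quotient.mk st u)
    have hPsurj : Function.Surjective P := by
      intro k
      obtain ⟨q, hq⟩ := e.surjective k
      obtain ⟨u, rfl⟩ := Quotient.exists_rep q
      exact ⟨u, hq⟩
    have hPadj : ∀ u v : Fin n, G.Adj u v ↔ P u ≠ P v := by
      intro u v
      constructor
      · intro hadj hPeq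
        exact (Quotient.exact (e.injective hPeq)) hadj
      · intro hPne
        by_contra hnadj
        exact hPne (congrArg e (Quotient.sound hnadj))
    have hedge : ∃ a b : Fin n, G.Adj a b := by
      have hne : (⟨0, by omega⟩ : Fin n) ≠ ⟨1, by omega⟩ := by simp [Fin.ext_iff]
      obtain ⟨p⟩ := hconn.preconnected ⟨0, by omega⟩ ⟨1, by omega⟩
      cases p with
      | cons h _ => exact ⟨_, _, h⟩
    obtain ⟨a, b, hab⟩ := hedge
    have hs2 : 2 ≤ s := by
      have : (Quotient.mk st a) ≠ (Quotient.mk st b) :=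
        fun h => (Quotient.exact h) hab
      have := Fintype.one_lt_card_iff_nontrivial.mpr ⟨_, _, this⟩
      omega
    have hsn : s ≤ n := by
      have := Fintype.card_le_of_surjective (Quotient.mk st)
        (fun q => Quotient.exists_rep q)
      simpa using this
    have hsn1 : s ≤ n - 1 := by
      by_contra hns
      have hsn' : s = n := by omega
      have hbij : Function.Bijective P := by
        rw [Fintype.bijective_iff_surjective_and_card]
        exact ⟨hPsurj, by simp [hsn']⟩
      have hcomplete : ∀ u v : Fin n, u ≠ v → G.Adj u v :=
        fun u v h => (hPadj u v).mpr fun hP => h (hbij.injective hP)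
      have hDc : ∀ u v : Fin n, distMatrix G u v = if u = v then (0:ℝ) else 1 := by
        intro u v
        rcases eq_or_ne u v with rfl | h
        · simp [hDself]
        · have := SimpleGraph.dist_eq_one_iff_adj.mpr (hcomplete u v h)
          simp [distMatrix, this, h]
      have hqc := quad_complete_eq (distMatrix G) hDc v0
      rw [hv0eq, hlam] at hqc
      nlinarith [mul_self_nonneg (∑ v, v0 v), hv0pos]
    exact ⟨s, hs2, hsn1, P, hPsurj, hPadj⟩
  · -- backward direction
    rintro ⟨s, hs2, hsn1, P, hPsurj, hPadj⟩
    have hdist2 : ∀ u v : Fin n, u ≠ v → P u = P v → G.dist u v = 2 := by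
      intro u v hne hP
      have hnadj : ¬ G.Adj u v := fun h => (hPadj u v).mp h hP
      have hge : 2 ≤ G.dist u v := by
        have h0 : G.dist u v ≠ 0 := fun h => hne (hconn.dist_eq_zero_iff.mp h)
        have h1 : G.dist u v ≠ 1 := fun h => hnadj (SimpleGraph.dist_eq_one_iff_adj.mp h)
        omega
      have hle : G.dist u v ≤ 2 := by
        obtain ⟨k, hk⟩ : ∃ k : Fin s, k ≠ P u := by
          haveI : Nontrivial (Fin s) :=
            Fin.nontrivial_iff_two_le.mpr hs2
          exact exists_ne (P u)
        obtain ⟨w, rfl⟩ := hPsurj k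
        have h1 : G.Adj u w := (hPadj u w).mpr (Ne.symm hk)
        have h2 : G.Adj w v := (hPadj w v).mpr (by rw [← hP]; exact hk)
        calc G.dist u v ≤ G.dist u w + G.dist w v := hconn.dist_triangle
        _ = 2 := by
            rw [SimpleGraph.dist_eq_one_iff_adj.mpr h1,
              SimpleGraph.dist_eq_one_iff_adj.mpr h2]
      omega
    have hD : ∀ u v : Fin n, distMatrix G u v
        = if u = v then (0:ℝ) else if P u = P v then 2 else 1 := by
      intro u v
      rcases eq_or_ne u v with rfl | h
      · simp [hDself]
      · rcases eq_or_ne (P u) (P v) with hP | hP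
        · have := hdist2 u v h hP
          simp [distMatrix, this, h, hP]
        · have := SimpleGraph.dist_eq_one_iff_adj.mpr ((hPadj u v).mpr hP)
          simp [distMatrix, this, h, hP]
    have hge : -2 ≤ lamn := by
      have hq := quad_multipartite_eq (distMatrix G) P hD v0
      rw [hv0eq] at hq
      have hT : 0 ≤ (∑ v, v0 v) * (∑ v, v0 v) := mul_self_nonneg _
      have hSk : 0 ≤ ∑ k : Fin s,
          (∑ v, if P v = k then v0 v else 0) * (∑ v, if P v = k then v0 v else 0) :=
        Finset.sum_nonneg fun k _ => mul_self_nonneg _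
      nlinarith [hq, hT, hSk, hv0pos]
    have hle : lamn ≤ -2 := by
      have hcard : s < n := by omega
      obtain ⟨u, v, hne, hPuv⟩ :=
        Fintype.exists_ne_map_eq_of_card_lt P (by simpa using hcard)
      have hQ := quad_two (distMatrix G) hne
      have hxx := quad_two (1 : Matrix (Fin n) (Fin n) ℝ) hne
      rw [Matrix.one_mulVec] at hxx
      rw [Matrix.one_apply_eq, Matrix.one_apply_eq,
        Matrix.one_apply_ne hne, Matrix.one_apply_ne (Ne.symm hne)] at hxx
      have e1 : distMatrix G u v = 2 := by rw [hD]; simp [hne, hPuv]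
      have e2 : distMatrix G v u = 2 := by rw [hD]; simp [Ne.symm hne, hPuv.symm]
      have hlx := hlow (fun j => (if j = u then (1:ℝ) else 0) - if j = v then 1 else 0)
      rw [hQ, hxx, hDself, hDself, e1, e2] at hlx
      linarith
    linarith


end DistanceEstrada
end

section
/- Let G be a connected simple graph on n ≥ 3 vertices that is neither the complete graph K_n nor a complete s-partite graph K_{n_1,...,n_s} (for any s with 2 ≤ s ≤ n-1 and n_1+...+n_s = n). Then the smallest distance eigenvalue satisfies λ_n(D) < -2.383. -/
namespace DistanceEstrada

variable {n : ℕ}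

/-! ### Auxiliary lemmas -/

open Matrix

/-- Rayleigh-quotient lower bound: if `lam` is below every eigenvalue of a Hermitian
real matrix `A`, then `lam * ‖v‖² ≤ vᵀ A v` for every vector `v`. -/
lemma rayleigh {m : ℕ} {A : Matrix (Fin m) (Fin m) ℝ} (hA : A.IsHermitian) {lam : ℝ}
    (hlow : ∀ i, lam ≤ hA.eigenvalues i) (v : Fin m → ℝ) :
    lam * (v ⬝ᵥ v) ≤ v ⬝ᵥ A *ᵥ v := by
  classical
  set U : Matrix (Fin m) (Fin m) ℝ := (hA.eigenvectorUnitary : Matrix (Fin m) (Fin m) ℝ) with hUdef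
  have hU : U ∈ Matrix.unitaryGroup (Fin m) ℝ := (hA.eigenvectorUnitary).2
  set w : Fin m → ℝ := Matrix.vecMul v U with hw
  have hAv : v ⬝ᵥ A *ᵥ v = w ⬝ᵥ (Matrix.diagonal hA.eigenvalues) *ᵥ w := by
    conv_lhs => rw [hA.spectral_theorem, Unitary.conjStarAlgAut_apply]
    rw [← Matrix.mulVec_mulVec, ← Matrix.mulVec_mulVec, Matrix.dotProduct_mulVec]
    have hstar : (star U) *ᵥ v = Matrix.vecMul v U := by
      rw [Matrix.star_eq_conjTranspose, Matrix.conjTranspose_eq_transpose_of_trivial,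
        Matrix.mulVec_transpose]
    rw [hstar]
    have hco : (RCLike.ofReal ∘ hA.eigenvalues : Fin m → ℝ) = hA.eigenvalues := by
      ext i; simp
    rw [hco, hw]
  have hvv : v ⬝ᵥ v = w ⬝ᵥ w := by
    have : w ⬝ᵥ w = Matrix.vecMul w (Matrix.transpose U) ⬝ᵥ v := by
      rw [hw, ← Matrix.mulVec_transpose, Matrix.dotProduct_mulVec]
    rw [this, hw, Matrix.vecMul_vecMul]
    have hUUt : U * Uᵀ = 1 := by
      have := Matrix.mem_unitaryGroup_iff.mp hU
      simpa [Matrix.star_eq_conjTranspose, Matrix.conjTranspose_eq_transpose_of_trivial] using this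
    rw [hUUt, Matrix.vecMul_one, dotProduct_comm]
  rw [hAv, hvv]
  have hdiag : w ⬝ᵥ (Matrix.diagonal hA.eigenvalues) *ᵥ w
      = ∑ i, hA.eigenvalues i * (w i * w i) := by
    simp [dotProduct, Matrix.mulVec_diagonal]
    congr 1; ext i; ring
  rw [hdiag, dotProduct, Finset.mul_sum]
  apply Finset.sum_le_sum
  intro i _
  exact mul_le_mul_of_nonneg_right (hlow i) (mul_self_nonneg _)

/-- A test vector supported on four vertices. -/
noncomputable def tv {m : ℕ} (p1 p2 p3 p4 : Fin m) (c1 c2 c3 c4 : ℝ) : Fin m → ℝ :=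
  Pi.single p1 c1 + Pi.single p2 c2 + Pi.single p3 c3 + Pi.single p4 c4

lemma quad4 {m : ℕ} (M : Matrix (Fin m) (Fin m) ℝ) (p1 p2 p3 p4 : Fin m) (c1 c2 c3 c4 : ℝ) :
    tv p1 p2 p3 p4 c1 c2 c3 c4 ⬝ᵥ M *ᵥ tv p1 p2 p3 p4 c1 c2 c3 c4
    = c1*c1*M p1 p1 + c1*c2*M p1 p2 + c1*c3*M p1 p3 + c1*c4*M p1 p4
    + c2*c1*M p2 p1 + c2*c2*M p2 p2 + c2*c3*M p2 p3 + c2*c4*M p2 p4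
    + c3*c1*M p3 p1 + c3*c2*M p3 p2 + c3*c3*M p3 p3 + c3*c4*M p3 p4
    + c4*c1*M p4 p1 + c4*c2*M p4 p2 + c4*c3*M p4 p3 + c4*c4*M p4 p4 := by
  unfold tv
  simp only [Matrix.mulVec_add, Matrix.mulVec_smul, Matrix.mulVec_single,
    dotProduct_add, add_dotProduct, smul_dotProduct,
    dotProduct_smul, single_dotProduct, smul_eq_mul, Pi.add_apply, Pi.smul_apply,
    op_smul_eq_mul, Matrix.col_apply, mul_one]
  ring

lemma norm4 {m : ℕ} (p1 p2 p3 p4 : Fin m) (c1 c2 c3 c4 : ℝ)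
    (h12 : p1 ≠ p2) (h13 : p1 ≠ p3) (h14 : p1 ≠ p4) (h23 : p2 ≠ p3) (h24 : p2 ≠ p4)
    (h34 : p3 ≠ p4) :
    tv p1 p2 p3 p4 c1 c2 c3 c4 ⬝ᵥ tv p1 p2 p3 p4 c1 c2 c3 c4
    = c1*c1 + c2*c2 + c3*c3 + c4*c4 := by
  unfold tv
  simp only [dotProduct_add, add_dotProduct, smul_dotProduct,
    dotProduct_smul, dotProduct_single, single_dotProduct, smul_eq_mul,
    Pi.add_apply, Pi.smul_apply,
    Pi.single_apply, if_neg h12, if_neg h13, if_neg h14, if_neg h23, if_neg h24, if_neg h34,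
    if_neg h12.symm, if_neg h13.symm, if_neg h14.symm, if_neg h23.symm, if_neg h24.symm,
    if_neg h34.symm, if_pos rfl, eq_self_iff_true, if_true, mul_one, mul_zero, add_zero, zero_add]

/-- A test vector supported on three vertices. -/
noncomputable def tv3 {m : ℕ} (p1 p2 p3 : Fin m) (c1 c2 c3 : ℝ) : Fin m → ℝ :=
  Pi.single p1 c1 + Pi.single p2 c2 + Pi.single p3 c3

lemma quad3 {m : ℕ} (M : Matrix (Fin m) (Fin m) ℝ) (p1 p2 p3 : Fin m) (c1 c2 c3 : ℝ) :
    tv3 p1 p2 p3 c1 c2 c3 ⬝ᵥ M *ᵥ tv3 p1 p2 p3 c1 c2 c3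
    = c1*c1*M p1 p1 + c1*c2*M p1 p2 + c1*c3*M p1 p3
    + c2*c1*M p2 p1 + c2*c2*M p2 p2 + c2*c3*M p2 p3
    + c3*c1*M p3 p1 + c3*c2*M p3 p2 + c3*c3*M p3 p3 := by
  unfold tv3
  simp only [Matrix.mulVec_add, Matrix.mulVec_smul, Matrix.mulVec_single,
    dotProduct_add, add_dotProduct, smul_dotProduct,
    dotProduct_smul, single_dotProduct, smul_eq_mul, Pi.add_apply, Pi.smul_apply,
    op_smul_eq_mul, Matrix.col_apply, mul_one]
  ring

lemma norm3 {m : ℕ} (p1 p2 p3 : Fin m) (c1 c2 c3 : ℝ)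
    (h12 : p1 ≠ p2) (h13 : p1 ≠ p3) (h23 : p2 ≠ p3) :
    tv3 p1 p2 p3 c1 c2 c3 ⬝ᵥ tv3 p1 p2 p3 c1 c2 c3 = c1*c1 + c2*c2 + c3*c3 := by
  unfold tv3
  simp only [dotProduct_add, add_dotProduct, smul_dotProduct,
    dotProduct_smul, dotProduct_single, single_dotProduct, smul_eq_mul,
    Pi.add_apply, Pi.smul_apply,
    Pi.single_apply, if_neg h12, if_neg h13, if_neg h23,
    if_neg h12.symm, if_neg h13.symm, if_neg h23.symm,
    if_pos rfl, eq_self_iff_true, if_true, mul_one, mul_zero, add_zero, zero_add]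

lemma two_le_dist {G : SimpleGraph (Fin n)} (hconn : G.Connected) {u v : Fin n}
    (hne : u ≠ v) (hnadj : ¬ G.Adj u v) : 2 ≤ G.dist u v := by
  have h0 : G.dist u v ≠ 0 :=
    SimpleGraph.dist_ne_zero_iff_ne_and_reachable.mpr ⟨hne, hconn u v⟩
  have h1 : G.dist u v ≠ 1 := fun h => hnadj (SimpleGraph.dist_eq_one_iff_adj.mp h)
  omega

lemma ne_of_two_le_dist {G : SimpleGraph (Fin n)} {u v : Fin n}
    (h : 2 ≤ G.dist u v) : u ≠ v := by
  rintro rfl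
  rw [SimpleGraph.dist_self] at h
  omega

/-- The "far" case: an edge `xz` with a vertex `y` at distance at least `2` from `x`
and at least `3` from `z`. -/
lemma case_far {G : SimpleGraph (Fin n)} (hconn : G.Connected) {lamn : ℝ}
    (hlow : ∀ i, lamn ≤ distEig G i) {x z y : Fin n}
    (hxz : G.Adj x z) (hx2 : 2 ≤ G.dist x y) (hz3 : 3 ≤ G.dist z y) :
    lamn < -2.383 := by
  have hxzne : x ≠ z := hxz.ne
  have hxy : x ≠ y := ne_of_two_le_dist hx2
  have hzy : z ≠ y := ne_of_two_le_dist (show 2 ≤ G.dist z y by omega)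
  have key := rayleigh (distMatrix_isHermitian G) hlow (tv3 x z y 1 1 (-1))
  rw [norm3 x z y 1 1 (-1) hxzne hxy hzy, quad3] at key
  have exz : distMatrix G x z = 1 := by
    simp only [distMatrix]
    rw [SimpleGraph.dist_eq_one_iff_adj.mpr hxz]; norm_num
  have ezx : distMatrix G z x = distMatrix G x z := by
    simp only [distMatrix]; rw [SimpleGraph.dist_comm]
  have eyx : distMatrix G y x = distMatrix G x y := by
    simp only [distMatrix]; rw [SimpleGraph.dist_comm]
  have eyz : distMatrix G y z = distMatrix G z y := by
    simp only [distMatrix]; rw [SimpleGraph.dist_comm]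
  have exx : distMatrix G x x = 0 := by simp [distMatrix]
  have ezz : distMatrix G z z = 0 := by simp [distMatrix]
  have eyy : distMatrix G y y = 0 := by simp [distMatrix]
  have hxy2 : (2 : ℝ) ≤ distMatrix G x y := by
    simp only [distMatrix]; exact_mod_cast hx2
  have hzy3 : (3 : ℝ) ≤ distMatrix G z y := by
    simp only [distMatrix]; exact_mod_cast hz3
  rw [exz, ezx, eyx, eyz, exx, ezz, eyy] at key
  nlinarith [key, hxy2, hzy3]

theorem exists_edge_nonneighbor {G : SimpleGraph (Fin n)} (hn : 3 ≤ n) (hconn : G.Connected)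
    (hnotK : G ≠ ⊤)
    (hnotMulti : ¬ ∃ s : ℕ, 2 ≤ s ∧ s ≤ n - 1 ∧ ∃ P : Fin n → Fin s,
      Function.Surjective P ∧ ∀ u v : Fin n, G.Adj u v ↔ P u ≠ P v) :
    ∃ x z y : Fin n, G.Adj x z ∧ ¬G.Adj y x ∧ ¬G.Adj y z ∧ y ≠ x ∧ y ≠ z := by
  classical
  by_contra hex
  push_neg at hex
  -- non-adjacency is an equivalence relation
  have htrans : ∀ u v w : Fin n, ¬G.Adj u v → ¬G.Adj v w → ¬G.Adj u w := by
    intro u v w h1 h2 hadj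
    have hvu : v ≠ u := by rintro rfl; exact h2 hadj
    have hvw := hex u w v hadj (fun h => h1 h.symm) h2 hvu
    subst hvw
    exact h1 hadj
  set st : Setoid (Fin n) := ⟨fun u v => ¬G.Adj u v,
    ⟨fun a => G.loopless.irrefl a, fun {a b} h ha => h ha.symm,
      fun {a b c} h1 h2 => htrans a b c h1 h2⟩⟩ with hst
  apply hnotMulti
  set s : ℕ := Fintype.card (Quotient st) with hs
  set e : Quotient st ≃ Fin s := Fintype.equivFin (Quotient st) with he
  set P : Fin n → Fin s := fun v => e (Quotient.mk st v) with hP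
  have hmk : ∀ u v : Fin n, Quotient.mk st u = Quotient.mk st v ↔ ¬G.Adj u v := by
    intro u v; exact Quotient.eq
  have hiff : ∀ u v : Fin n, G.Adj u v ↔ P u ≠ P v := by
    intro u v
    constructor
    · intro hadj hPeq
      have := e.injective hPeq
      exact (hmk u v).mp this hadj
    · intro hne
      by_contra hnadj
      exact hne (congrArg e ((hmk u v).mpr hnadj))
  -- there is an edge
  obtain ⟨a, b, hab⟩ := Fintype.exists_pair_of_one_lt_card
    (by rw [Fintype.card_fin]; omega : 1 < Fintype.card (Fin n))
  obtain ⟨p⟩ := hconn a b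
  have hedge : ∃ u v : Fin n, G.Adj u v := by
    cases p with
    | nil => exact absurd rfl hab
    | cons h q => exact ⟨_, _, h⟩
  obtain ⟨u, v, huv⟩ := hedge
  have h2s : 2 ≤ s := by
    have hne : P u ≠ P v := (hiff u v).mp huv
    have : Nontrivial (Fin s) := ⟨⟨P u, P v, hne⟩⟩
    have := Fintype.one_lt_card (α := Fin s)
    rw [Fintype.card_fin] at this
    omega
  have hsn : s ≤ n := by
    have := Fintype.card_le_of_surjective (Quotient.mk st)
      (fun q => Quotient.inductionOn q fun a => ⟨a, rfl⟩)
    rw [Fintype.card_fin] at this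
    exact this
  have hsne : s ≠ n := by
    intro hcard
    apply hnotK
    have hbij : Function.Bijective (Quotient.mk st) := by
      rw [Fintype.bijective_iff_surjective_and_card]
      exact ⟨fun q => Quotient.inductionOn q fun a => ⟨a, rfl⟩,
        by rw [Fintype.card_fin, ← hs]; exact hcard.symm⟩
    ext u v
    simp only [SimpleGraph.top_adj]
    constructor
    · exact fun h => h.ne
    · intro hne
      by_contra hnadj
      exact hne (hbij.injective ((hmk u v).mpr hnadj))
  exact ⟨s, h2s, by omega, P, fun i => ⟨(e.symm i).out, by simp [hP, Quotient.out_eq]⟩, hiff⟩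

/-- **Lemma 4, third part.** If a connected graph `G` on `n ≥ 3` vertices is neither complete nor
complete multipartite, then its smallest distance eigenvalue satisfies `λₙ(D) < -2.383`. -/
theorem least_distance_eigenvalue_lt {n : ℕ} (hn : 3 ≤ n)
    (G : SimpleGraph (Fin n)) (hconn : G.Connected)
    (hnotK : G ≠ ⊤)
    (hnotMulti : ¬ ∃ s : ℕ, 2 ≤ s ∧ s ≤ n - 1 ∧ ∃ P : Fin n → Fin s,
      Function.Surjective P ∧ ∀ u v : Fin n, G.Adj u v ↔ P u ≠ P v)
    (lamn : ℝ) (hlamn : IsLeast (Set.range (distEig G)) lamn) :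
    lamn < -2.383 := by
  classical
  have hlow : ∀ i, lamn ≤ distEig G i := fun i => hlamn.2 ⟨i, rfl⟩
  obtain ⟨x, z, y, hxz, hyx, hyz, hyxne, hyzne⟩ :=
    exists_edge_nonneighbor hn hconn hnotK hnotMulti
  have hxy2 : 2 ≤ G.dist x y := two_le_dist hconn hyxne.symm (fun h => hyx h.symm)
  have hzy2 : 2 ≤ G.dist z y := two_le_dist hconn hyzne.symm (fun h => hyz h.symm)
  by_cases hz3 : 3 ≤ G.dist z y
  · exact case_far hconn hlow hxz hxy2 hz3
  by_cases hx3 : 3 ≤ G.dist x y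
  · exact case_far hconn hlow hxz.symm hzy2 hx3
  -- now both distances to `y` are exactly 2
  have hdx : G.dist x y = 2 := by omega
  have hdz : G.dist z y = 2 := by omega
  obtain ⟨p, hp⟩ := (hconn x y).exists_walk_length_eq_dist
  rw [hdx] at hp
  set w := p.getVert 1 with hwdef
  have hxw : G.Adj x w := by
    have := p.adj_getVert_succ (i := 0) (by omega)
    simpa [SimpleGraph.Walk.getVert_zero] using this
  have hwy : G.Adj w y := by
    have h := p.adj_getVert_succ (i := 1) (by omega)
    have h2 : p.getVert 2 = y := by
      have hl := p.getVert_length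
      rw [hp] at hl
      exact hl
    rwa [h2] at h
  -- distinctness
  have hxzne : x ≠ z := hxz.ne
  have hxyne : x ≠ y := ne_of_two_le_dist hxy2
  have hzyne : z ≠ y := ne_of_two_le_dist hzy2
  have hxwne : x ≠ w := hxw.ne
  have hwyne : w ≠ y := hwy.ne
  have hwzne : w ≠ z := by rintro rfl; exact hyz hwy.symm
  -- exact distances
  have d1 : G.dist x z = 1 := SimpleGraph.dist_eq_one_iff_adj.mpr hxz
  have d1' : G.dist z x = 1 := by rwa [SimpleGraph.dist_comm]
  have d2 : G.dist x y = 2 := hdx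
  have d2' : G.dist y x = 2 := by rwa [SimpleGraph.dist_comm]
  have d3 : G.dist z y = 2 := hdz
  have d3' : G.dist y z = 2 := by rwa [SimpleGraph.dist_comm]
  have d4 : G.dist x w = 1 := SimpleGraph.dist_eq_one_iff_adj.mpr hxw
  have d4' : G.dist w x = 1 := by rwa [SimpleGraph.dist_comm]
  have d5 : G.dist w y = 1 := SimpleGraph.dist_eq_one_iff_adj.mpr hwy
  have d5' : G.dist y w = 1 := by rwa [SimpleGraph.dist_comm]
  by_cases hzw : G.Adj z w
  · -- w is adjacent to z : use the test vector (13, 13, -21, -2)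
    have d6 : G.dist z w = 1 := SimpleGraph.dist_eq_one_iff_adj.mpr hzw
    have d6' : G.dist w z = 1 := by rwa [SimpleGraph.dist_comm]
    have key := rayleigh (distMatrix_isHermitian G) hlow (tv x z y w 13 13 (-21) (-2))
    rw [norm4 x z y w 13 13 (-21) (-2) hxzne hxyne hxwne hzyne (Ne.symm hwzne)
      (Ne.symm hwyne), quad4] at key
    simp only [distMatrix, SimpleGraph.dist_self, d1, d1', d2, d2', d3, d3', d4, d4', d5, d5',
      d6, d6'] at key
    norm_num at key
    linarith
  · -- w is not adjacent to z : use the test vector (1, 2, -2, -1)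
    have d6 : G.dist z w = 2 := by
      have hle : G.dist z w ≤ 2 := by
        have := hconn.dist_triangle (u := z) (v := x) (w := w)
        omega
      have hge : 2 ≤ G.dist z w := two_le_dist hconn (Ne.symm hwzne) hzw
      omega
    have d6' : G.dist w z = 2 := by rwa [SimpleGraph.dist_comm]
    have key := rayleigh (distMatrix_isHermitian G) hlow (tv x z y w 1 2 (-2) (-1))
    rw [norm4 x z y w 1 2 (-2) (-1) hxzne hxyne hxwne hzyne (Ne.symm hwzne)
      (Ne.symm hwyne), quad4] at key
    simp only [distMatrix, SimpleGraph.dist_self, d1, d1', d2, d2', d3, d3', d4, d4', d5, d5',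
      d6, d6'] at key
    norm_num at key
    linarith

end DistanceEstrada
end
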